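/- arXiv:1605.06254 — 8 statements merged into one kernel-verified Lean document; each statement's English description precedes it below -/
import Mathlib

section
/- Let p : ℝ → ℝ be a 2π-periodic function of class C² with p(φ) + p''(φ) > 0 for all φ, satisfying ∫₀^{2π} p(φ)cos φ dφ = 0 and ∫₀^{2π} p(φ)sin φ dφ = 0. Set L = ∫₀^{2π} p dφ, F = ½∫₀^{2π}(p² − p'²) dφ, A = ½∫₀^{2π} p² dφ and Δ = L² − 4πF. Then Δ ≥ 3π(A − F). -/
open Real

section WirtingerAux

open MeasureTheory Set AddCircle
open scoped ENNReal

/-- Parseval for a continuous `2π`-periodic real function, via `liftIco`. -/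
private lemma parseval_aux (f : ℝ → ℝ) (hf : Continuous f) (hper : f 0 = f (2 * π)) :
    Summable (fun n : ℤ =>
        ‖fourierCoeffOn (by positivity : (0:ℝ) < 2 * π) (fun x => Complex.ofReal (f x)) n‖ ^ 2) ∧
    ∑' n : ℤ, ‖fourierCoeffOn (by positivity : (0:ℝ) < 2 * π) (fun x => Complex.ofReal (f x)) n‖ ^ 2
      = (1 / (2 * π)) * ∫ x in (0:ℝ)..(2 * π), f x ^ 2 := by
  haveI hT : Fact (0 < 2 * π) := ⟨by positivity⟩
  set fC : ℝ → ℂ := fun x => Complex.ofReal (f x) with hfC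
  have hGc : Continuous (AddCircle.liftIco (2 * π) 0 fC) :=
    AddCircle.liftIco_zero_continuous (by simp [fC, hper])
      ((Complex.continuous_ofReal.comp hf).continuousOn)
  set G : C(AddCircle (2 * π), ℂ) := ContinuousMap.mk _ hGc with hG
  set Gq := ContinuousMap.toLp (E := ℂ) 2 haarAddCircle ℂ G with hGq
  have hcoeff : ∀ n : ℤ, fourierCoeff (Gq : AddCircle (2*π) → ℂ) n
      = fourierCoeffOn (by positivity : (0:ℝ) < 2 * π) fC n := by
    intro n
    rw [fourierCoeff_toLp]
    have := fourierCoeff_liftIco_eq (T := 2*π) (a := 0) fC n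
    rw [show (G : AddCircle (2*π) → ℂ) = AddCircle.liftIco (2 * π) 0 fC from rfl, this]
    congr 1
    simp
  have hsumm : Summable (fun n : ℤ => ‖fourierCoeff (Gq : AddCircle (2*π) → ℂ) n‖ ^ 2) := by
    have h1 : Memℓp (fun n : ℤ => fourierBasis.repr Gq n) 2 := lp.memℓp (fourierBasis.repr Gq)
    have h2 := h1.summable (by norm_num)
    simp_rw [fourierBasis_repr] at h2
    convert h2 using 2 with n
    rw [show ((2:ℝ≥0∞).toReal) = ((2:ℕ):ℝ) from by norm_num, Real.rpow_natCast]
  have hval := tsum_sq_fourierCoeff Gq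
  have hae : (Gq : AddCircle (2*π) → ℂ) =ᵐ[haarAddCircle] (G : AddCircle (2*π) → ℂ) :=
    ContinuousMap.coeFn_toLp (p := 2) (μ := haarAddCircle) (𝕜 := ℂ) G
  have hrhs : ∫ t : AddCircle (2*π), ‖Gq t‖ ^ 2 ∂haarAddCircle
      = (1 / (2 * π)) * ∫ x in (0:ℝ)..(2 * π), f x ^ 2 := by
    rw [integral_congr_ae (g := fun t => ‖G t‖ ^ 2) (hae.mono (fun t ht => by rw [ht]))]
    have hvol : ∫ t : AddCircle (2*π), ‖G t‖ ^ 2 ∂haarAddCircle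
        = (1 / (2 * π)) * ∫ t : AddCircle (2*π), ‖G t‖ ^ 2 := by
      rw [volume_eq_smul_haarAddCircle, integral_smul_measure]
      rw [ENNReal.toReal_ofReal (by positivity : (0:ℝ) ≤ 2 * π)]
      rw [smul_eq_mul, ← mul_assoc]
      rw [one_div, inv_mul_cancel₀ (by positivity : (2*π : ℝ) ≠ 0), one_mul]
    rw [hvol]
    congr 1
    rw [← AddCircle.intervalIntegral_preimage (2*π) 0 (fun z => ‖G z‖^2), zero_add]
    rw [intervalIntegral.integral_of_le (by positivity), intervalIntegral.integral_of_le (by positivity)]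
    rw [integral_Ioc_eq_integral_Ioo, integral_Ioc_eq_integral_Ioo]
    refine setIntegral_congr_fun measurableSet_Ioo (fun x hx => ?_)
    have hx' : x ∈ Ico (0:ℝ) (0 + 2*π) := ⟨hx.1.le, by simpa using hx.2⟩
    show ‖AddCircle.liftIco (2*π) 0 fC ↑x‖ ^ 2 = f x ^ 2
    rw [AddCircle.liftIco_coe_apply hx']
    simp [fC, Complex.norm_real, sq_abs]
  constructor
  · convert hsumm using 2 with n
    rw [hcoeff n]
  · calc ∑' n : ℤ, ‖fourierCoeffOn (by positivity : (0:ℝ) < 2 * π) fC n‖ ^ 2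
        = ∑' n : ℤ, ‖fourierCoeff (Gq : AddCircle (2*π) → ℂ) n‖ ^ 2 := by
          congr 1; funext n; rw [hcoeff n]
      _ = (1 / (2 * π)) * ∫ x in (0:ℝ)..(2 * π), f x ^ 2 := by rw [hval, hrhs]

private lemma coeff_deriv_rel (p : ℝ → ℝ) (hC2 : ContDiff ℝ 2 p)
    (hper : Function.Periodic p (2 * π)) {n : ℤ} (hn : n ≠ 0) :
    fourierCoeffOn (by positivity : (0:ℝ) < 2 * π) (fun x => Complex.ofReal (deriv p x)) n
      = Complex.I * n * fourierCoeffOn (by positivity : (0:ℝ) < 2 * π)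
          (fun x => Complex.ofReal (p x)) n := by
  have hd : ∀ x ∈ uIcc (0:ℝ) (2*π),
      HasDerivAt (fun y => (Complex.ofReal (p y))) ((Complex.ofReal (deriv p x))) x :=
    fun x _ => (((hC2.differentiable (by norm_num)).differentiableAt).hasDerivAt).ofReal_comp
  have hint : IntervalIntegrable (fun x => (Complex.ofReal (deriv p x))) volume 0 (2*π) :=
    (Complex.continuous_ofReal.comp (hC2.continuous_deriv one_le_two)).intervalIntegrable _ _
  have key := fourierCoeffOn_of_hasDerivAt (by positivity : (0:ℝ) < 2 * π) hn hd hint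
  have hpp : p (2*π) = p 0 := by simpa using hper 0
  rw [hpp] at key
  simp only [sub_self, mul_zero, zero_sub, zero_mul] at key
  rw [key]
  have hπ : (π : ℂ) ≠ 0 := Complex.ofReal_ne_zero.mpr Real.pi_ne_zero
  have hnC : (n : ℂ) ≠ 0 := Int.cast_ne_zero.mpr hn
  have hI : Complex.I ≠ 0 := Complex.I_ne_zero
  field_simp
  push_cast
  ring

private lemma coeff_zero_eq (p : ℝ → ℝ) :
    fourierCoeffOn (by positivity : (0:ℝ) < 2 * π) (fun x => Complex.ofReal (p x)) 0
      = Complex.ofReal ((1 / (2 * π)) * ∫ x in (0:ℝ)..(2 * π), p x) := by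
  rw [fourierCoeffOn_eq_integral]
  simp only [neg_zero, fourier_zero, one_smul, sub_zero]
  rw [intervalIntegral.integral_ofReal]
  rw [Complex.real_smul, Complex.ofReal_mul]

private lemma coeff_one_eq (p : ℝ → ℝ) (hp : Continuous p)
    (hcos : ∫ φ in (0:ℝ)..(2 * π), p φ * Real.cos φ = 0)
    (hsin : ∫ φ in (0:ℝ)..(2 * π), p φ * Real.sin φ = 0) :
    fourierCoeffOn (by positivity : (0:ℝ) < 2 * π) (fun x => Complex.ofReal (p x)) 1 = 0 := by
  rw [fourierCoeffOn_eq_integral]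
  have hint : ∀ x : ℝ, (fourier (-1) (x : AddCircle (2*π - 0))) • (Complex.ofReal (p x))
      = Complex.ofReal (p x * Real.cos x) - Complex.ofReal (p x * Real.sin x) * Complex.I := by
    intro x
    rw [fourier_coe_apply]
    have harg : 2 * (π:ℂ) * Complex.I * (-1 : ℤ) * x / (((2*π : ℝ) - 0 : ℝ) : ℂ)
        = -x * Complex.I := by
      have hπ : (π:ℂ) ≠ 0 := Complex.ofReal_ne_zero.mpr Real.pi_ne_zero
      push_cast
      field_simp
      ring
    rw [harg, Complex.exp_mul_I, smul_eq_mul]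
    rw [Complex.cos_neg, Complex.sin_neg]
    rw [← Complex.ofReal_cos, ← Complex.ofReal_sin]
    push_cast
    ring
  simp_rw [hint]
  rw [intervalIntegral.integral_sub ((Continuous.intervalIntegrable (by fun_prop) 0 (2*π) :
        IntervalIntegrable (fun x => Complex.ofReal (p x * Real.cos x)) volume 0 (2*π)))
      ((Continuous.intervalIntegrable (by fun_prop) 0 (2*π) :
        IntervalIntegrable (fun x => Complex.ofReal (p x * Real.sin x) * Complex.I) volume 0 (2*π))),
    intervalIntegral.integral_mul_const, intervalIntegral.integral_ofReal,
    intervalIntegral.integral_ofReal, hcos, hsin]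
  simp

private lemma coeff_neg_one_eq (p : ℝ → ℝ) (hp : Continuous p)
    (hcos : ∫ φ in (0:ℝ)..(2 * π), p φ * Real.cos φ = 0)
    (hsin : ∫ φ in (0:ℝ)..(2 * π), p φ * Real.sin φ = 0) :
    fourierCoeffOn (by positivity : (0:ℝ) < 2 * π) (fun x => Complex.ofReal (p x)) (-1) = 0 := by
  rw [fourierCoeffOn_eq_integral]
  have hint : ∀ x : ℝ, (fourier (-(-1)) (x : AddCircle (2*π - 0))) • (Complex.ofReal (p x))
      = Complex.ofReal (p x * Real.cos x) + Complex.ofReal (p x * Real.sin x) * Complex.I := by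
    intro x
    rw [fourier_coe_apply]
    have harg : 2 * (π:ℂ) * Complex.I * ((-(-1) : ℤ)) * x / (((2*π : ℝ) - 0 : ℝ) : ℂ)
        = x * Complex.I := by
      have hπ : (π:ℂ) ≠ 0 := Complex.ofReal_ne_zero.mpr Real.pi_ne_zero
      push_cast
      field_simp
      ring
    rw [harg, Complex.exp_mul_I, smul_eq_mul]
    rw [← Complex.ofReal_cos, ← Complex.ofReal_sin]
    push_cast
    ring
  simp_rw [hint]
  rw [intervalIntegral.integral_add ((Continuous.intervalIntegrable (by fun_prop) 0 (2*π) :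
        IntervalIntegrable (fun x => Complex.ofReal (p x * Real.cos x)) volume 0 (2*π)))
      ((Continuous.intervalIntegrable (by fun_prop) 0 (2*π) :
        IntervalIntegrable (fun x => Complex.ofReal (p x * Real.sin x) * Complex.I) volume 0 (2*π))),
    intervalIntegral.integral_mul_const, intervalIntegral.integral_ofReal,
    intervalIntegral.integral_ofReal, hcos, hsin]
  simp

end WirtingerAux

/-- Theorem 3.1: Bonnesen-style lower bound for the isoperimetric deficit:
`Δ ≥ 3π(A − F)` where `A` is the area of the pedal curve with respect to the
Steiner point and `F` the area of the convex set. -/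
theorem isoperimetric_deficit_ge_three_pi_pedal_area_diff
    (p : ℝ → ℝ)
    (hper : Function.Periodic p (2 * π))
    (hC2 : ContDiff ℝ 2 p)
    (hconv : ∀ φ, p φ + deriv (deriv p) φ > 0)
    (hcos : ∫ φ in (0:ℝ)..(2 * π), p φ * Real.cos φ = 0)
    (hsin : ∫ φ in (0:ℝ)..(2 * π), p φ * Real.sin φ = 0)
    (L F A Δ : ℝ)
    (hL : L = ∫ φ in (0:ℝ)..(2 * π), p φ)
    (hF : F = (1 / 2) * ∫ φ in (0:ℝ)..(2 * π), (p φ ^ 2 - (deriv p φ) ^ 2))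
    (hA : A = (1 / 2) * ∫ φ in (0:ℝ)..(2 * π), p φ ^ 2)
    (hΔ : Δ = L ^ 2 - 4 * π * F) :
    Δ ≥ 3 * π * (A - F) := by
  have hπ : (0:ℝ) < π := Real.pi_pos
  have hp : Continuous p := hC2.continuous
  have hp' : Continuous (deriv p) := hC2.continuous_deriv one_le_two
  -- the three basic integrals
  set I0 : ℝ := ∫ φ in (0:ℝ)..(2 * π), p φ with hI0
  set I2 : ℝ := ∫ φ in (0:ℝ)..(2 * π), p φ ^ 2 with hI2
  set I1 : ℝ := ∫ φ in (0:ℝ)..(2 * π), (deriv p φ) ^ 2 with hI1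
  have hsplit : (∫ φ in (0:ℝ)..(2 * π), (p φ ^ 2 - (deriv p φ) ^ 2)) = I2 - I1 := by
    rw [intervalIntegral.integral_sub (f := fun φ => p φ ^ 2) (g := fun φ => deriv p φ ^ 2) ((hp.pow 2).intervalIntegrable _ _)
      ((hp'.pow 2).intervalIntegrable _ _)]
  -- Fourier coefficients
  set c : ℤ → ℂ :=
    fun n => fourierCoeffOn (by positivity : (0:ℝ) < 2 * π) (fun x => Complex.ofReal (p x)) n
    with hc
  set d : ℤ → ℂ :=
    fun n => fourierCoeffOn (by positivity : (0:ℝ) < 2 * π)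
      (fun x => Complex.ofReal (deriv p x)) n with hd
  have hp02 : p 0 = p (2 * π) := by simpa using (hper 0).symm
  have hperiodic_deriv : deriv p 0 = deriv p (2 * π) := by
    have : (fun y => p (y + 2 * π)) = p := funext fun y => hper y
    have h2 : deriv p (2 * π) = deriv p 0 := by
      conv_lhs => rw [show (2*π : ℝ) = 0 + 2*π by ring]
      rw [← deriv_comp_add_const p (2*π) 0, this]
    exact h2.symm
  obtain ⟨hsum_c, hval_c⟩ := parseval_aux p hp hp02
  obtain ⟨hsum_d, hval_d⟩ := parseval_aux (deriv p) hp' hperiodic_deriv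
  -- norms of coefficients of the derivative
  have hdn : ∀ n : ℤ, n ≠ 0 → ‖d n‖ ^ 2 = (n:ℝ) ^ 2 * ‖c n‖ ^ 2 := by
    intro n hn
    simp only [hd, hc]
    rw [coeff_deriv_rel p hC2 hper hn]
    rw [norm_mul, norm_mul, Complex.norm_I, one_mul, mul_pow]
    congr 1
    rw [show ((n:ℂ)) = (((n:ℝ)):ℂ) from by push_cast; ring, Complex.norm_real]
    exact sq_abs _
  have hc1 : c 1 = 0 := coeff_one_eq p hp hcos hsin
  have hcm1 : c (-1) = 0 := coeff_neg_one_eq p hp hcos hsin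
  have hc0 : ‖c 0‖ ^ 2 = (1 / (2*π)) ^ 2 * I0 ^ 2 := by
    simp only [hc]
    rw [coeff_zero_eq p, Complex.norm_real]
    rw [Real.norm_eq_abs, sq_abs, mul_pow, ← hI0]
  -- comparison function
  set g : ℤ → ℝ := fun n => if n = 0 then 0 else 4 * ‖c n‖ ^ 2 with hg
  have hg_nonneg : ∀ n, 0 ≤ g n := by
    intro n; rw [hg]; dsimp only; split <;> positivity
  have hg_le : ∀ n, g n ≤ ‖d n‖ ^ 2 := by
    intro n
    rw [hg]; dsimp only
    by_cases hn0 : n = 0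
    · simp only [hn0, if_pos rfl]; positivity
    rw [if_neg hn0, hdn n hn0]
    by_cases hn1 : n = 1
    · simp [hn1, hc1]
    by_cases hnm1 : n = -1
    · simp [hnm1, hcm1]
    have h2le : (2:ℤ) ≤ n ∨ n ≤ -2 := by omega
    have h4 : (4:ℝ) ≤ (n:ℝ) ^ 2 := by
      rcases h2le with h | h
      · have : (2:ℝ) ≤ (n:ℝ) := by exact_mod_cast h
        nlinarith
      · have : (n:ℝ) ≤ -2 := by exact_mod_cast h
        nlinarith
    nlinarith [sq_nonneg ‖c n‖]
  have hg_sum : Summable g := Summable.of_nonneg_of_le hg_nonneg hg_le hsum_d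
  have hts : ∑' n, g n ≤ ∑' n, ‖d n‖ ^ 2 := Summable.tsum_le_tsum hg_le hg_sum hsum_d
  -- split off the zero coefficient
  set s : ℝ := ∑' n : ℤ, (if n = 0 then 0 else ‖c n‖ ^ 2) with hs
  have hsplit_c : ∑' n, ‖c n‖ ^ 2 = ‖c 0‖ ^ 2 + s := Summable.tsum_eq_add_tsum_ite hsum_c 0
  have hgs : ∑' n, g n = 4 * s := by
    rw [hs, ← tsum_mul_left]
    congr 1; funext n
    rw [hg]; dsimp only
    split <;> simp
  -- put everything together
  rw [← hI2] at hval_c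
  rw [← hI1] at hval_d
  have e2 : I2 = 2 * π * (‖c 0‖ ^ 2 + s) := by
    have h := hval_c
    rw [hsplit_c] at h
    rw [h]
    field_simp
  have e1 : I1 ≥ 8 * π * s := by
    have h2 : 4 * s ≤ (1 / (2*π)) * I1 := by
      rw [← hval_d, ← hgs]; exact hts
    have h3 := mul_le_mul_of_nonneg_left h2 (le_of_lt (by positivity : (0:ℝ) < 2*π))
    have h4 : 2*π*((1/(2*π))*I1) = I1 := by field_simp
    linarith
  have e0 : I0 ^ 2 = 4 * π ^ 2 * ‖c 0‖ ^ 2 := by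
    rw [hc0]; field_simp; ring
  have hs_nonneg : 0 ≤ s := by
    rw [hs]
    refine tsum_nonneg fun n => ?_
    split <;> positivity
  -- final arithmetic
  rw [hΔ, hL, hF, hA, hsplit]
  have hkey : I0 ^ 2 - 2 * π * I2 + (π / 2) * I1 ≥ 0 := by
    have h1' : (π / 2) * (8 * π * s) ≤ (π / 2) * I1 :=
      mul_le_mul_of_nonneg_left e1 (by positivity)
    have e2' : 2 * π * I2 = 4 * π ^ 2 * ‖c 0‖ ^ 2 + 4 * π ^ 2 * s := by rw [e2]; ring
    have h1'' : (π / 2) * (8 * π * s) = 4 * π ^ 2 * s := by ring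
    linarith
  linarith [hkey]
end

section
/- Let p : ℝ → ℝ be a 2π-periodic function of class C² with p(φ) + p''(φ) > 0 for all φ, satisfying ∫₀^{2π} p(φ)cos φ dφ = 0 and ∫₀^{2π} p(φ)sin φ dφ = 0, and suppose there is a constant w such that p(φ) + p(φ + π) = w for all φ (constant width). Set L = ∫₀^{2π} p dφ, F = ½∫₀^{2π}(p² − p'²) dφ, A = ½∫₀^{2π} p² dφ and Δ = L² − 4πF. Then Δ ≥ (32/9)π(A − F). -/
open Real

open MeasureTheory intervalIntegral Set


local instance fact2pi : Fact (0 < 2 * π) := ⟨by positivity⟩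

lemma lift_eq_on (u : ℝ → ℂ) (hper : Function.Periodic u (2 * π)) {x : ℝ}
    (hx : x ∈ Icc 0 (2 * π)) : AddCircle.liftIco (2 * π) 0 u x = u x := by
  rcases eq_or_lt_of_le hx.2 with h2 | h2
  · have hc : ((x : ℝ) : AddCircle (2 * π)) = ((0 : ℝ) : AddCircle (2 * π)) := by
      rw [h2]; simpa using AddCircle.coe_add_period (2 * π) 0
    rw [hc, AddCircle.liftIco_zero_coe_apply ⟨le_refl 0, by positivity⟩]
    rw [h2, ← zero_add (2 * π), hper 0]
  · exact AddCircle.liftIco_zero_coe_apply ⟨hx.1, h2⟩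

lemma coeff_eq (u : ℝ → ℂ) (hper : Function.Periodic u (2 * π)) (n : ℤ) :
    fourierCoeff (AddCircle.liftIco (2 * π) 0 u) n
      = (1 / (2 * π) : ℂ) • ∫ x in (0:ℝ)..(2 * π),
          (fourier (-n) (x : AddCircle (2 * π))) • u x := by
  rw [fourierCoeff_eq_intervalIntegral _ n 0]
  have h1 : (1 / (2 * π) : ℂ) = ((1 / (2 * π) : ℝ) : ℂ) := by push_cast; ring
  rw [h1, zero_add]
  norm_cast
  congr 1
  apply intervalIntegral.integral_congr
  intro x hx
  rw [Set.uIcc_of_le (by positivity)] at hx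
  show (fourier (-n)) ↑x • AddCircle.liftIco (2 * π) 0 u ↑x = (fourier (-n)) ↑x • u x
  rw [lift_eq_on u hper hx]

lemma parseval_lift (u : ℝ → ℂ) (hc : Continuous u) (hper : Function.Periodic u (2 * π)) :
    Summable (fun n : ℤ => ‖fourierCoeff (AddCircle.liftIco (2 * π) 0 u) n‖ ^ 2) ∧
    2 * π * ∑' n : ℤ, ‖fourierCoeff (AddCircle.liftIco (2 * π) 0 u) n‖ ^ 2
      = ∫ x in (0:ℝ)..(2 * π), ‖u x‖ ^ 2 := by
  have hcont : Continuous (AddCircle.liftIco (2 * π) 0 u) := by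
    apply AddCircle.liftIco_zero_continuous
    · rw [← zero_add (2 * π), hper 0]
    · exact hc.continuousOn
  set FC : C(AddCircle (2 * π), ℂ) := ⟨_, hcont⟩ with hFC
  set Flp := ContinuousMap.toLp (E := ℂ) 2 AddCircle.haarAddCircle ℂ FC with hFlp
  have hcoeff : ∀ n, fourierCoeff (Flp : AddCircle (2 * π) → ℂ) n
      = fourierCoeff (AddCircle.liftIco (2 * π) 0 u) n := fun n => fourierCoeff_toLp FC n
  have hsumm : Summable (fun n : ℤ => ‖fourierCoeff (Flp : AddCircle (2*π) → ℂ) n‖ ^ 2) := by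
    have h2 := (lp.memℓp (fourierBasis.repr Flp)).summable
      (by norm_num : (0:ℝ) < ENNReal.toReal 2)
    refine (summable_congr fun n => ?_).mp h2
    rw [fourierBasis_repr]
    norm_num
  have hpars := tsum_sq_fourierCoeff Flp
  constructor
  · exact (summable_congr (fun n => by rw [hcoeff])).mp hsumm
  · have h3 : ∑' n : ℤ, ‖fourierCoeff (AddCircle.liftIco (2 * π) 0 u) n‖ ^ 2
        = ∫ t : AddCircle (2 * π), ‖(Flp : AddCircle (2*π) → ℂ) t‖ ^ 2 ∂AddCircle.haarAddCircle := by
      rw [← hpars]; exact tsum_congr fun n => by rw [hcoeff]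
    rw [h3]
    have h4 : ∫ t : AddCircle (2 * π), ‖(Flp : AddCircle (2*π) → ℂ) t‖ ^ 2 ∂AddCircle.haarAddCircle
        = ∫ t : AddCircle (2 * π), ‖FC t‖ ^ 2 ∂AddCircle.haarAddCircle := by
      apply MeasureTheory.integral_congr_ae
      filter_upwards [ContinuousMap.coeFn_toLp (p := 2) AddCircle.haarAddCircle (𝕜 := ℂ) FC] with t ht
      rw [ht]
    rw [h4]
    have h5 : ∫ x in (0:ℝ)..(0 + 2 * π), ‖FC (x : AddCircle (2*π))‖ ^ 2
        = ∫ t : AddCircle (2 * π), ‖FC t‖ ^ 2 ∂(volume) :=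
      AddCircle.intervalIntegral_preimage (2 * π) 0 (fun t => ‖FC t‖ ^ 2)
    rw [AddCircle.volume_eq_smul_haarAddCircle, MeasureTheory.integral_smul_measure,
      ENNReal.toReal_ofReal (by positivity : (0:ℝ) ≤ 2 * π)] at h5
    rw [zero_add] at h5
    have h6 : ∫ x in (0:ℝ)..(2 * π), ‖FC (x : AddCircle (2*π))‖ ^ 2
        = ∫ x in (0:ℝ)..(2 * π), ‖u x‖ ^ 2 := by
      apply intervalIntegral.integral_congr
      intro x hx
      rw [Set.uIcc_of_le (by positivity)] at hx
      show ‖AddCircle.liftIco (2 * π) 0 u ↑x‖ ^ 2 = _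
      rw [lift_eq_on u hper hx]
    rw [← h6, h5, smul_eq_mul]

lemma coeff_deriv (u u' : ℝ → ℂ) (hder : ∀ x, HasDerivAt u (u' x) x)
    (hc' : Continuous u') (hper : Function.Periodic u (2 * π))
    (hper' : Function.Periodic u' (2 * π)) (n : ℤ) :
    fourierCoeff (AddCircle.liftIco (2 * π) 0 u') n
      = (Complex.I * n) * fourierCoeff (AddCircle.liftIco (2 * π) 0 u) n := by
  rw [coeff_eq u hper n, coeff_eq u' hper' n]
  have hfd : ∀ x : ℝ, HasDerivAt (fun y : ℝ => fourier (-n) (y : AddCircle (2 * π)))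
      (-Complex.I * n * fourier (-n) (x : AddCircle (2 * π))) x := by
    intro x
    have := hasDerivAt_fourier_neg (2 * π) n x
    convert this using 2
    have : (2 * (π:ℂ)) ≠ 0 := by
      simp [Real.pi_ne_zero]
    field_simp
    push_cast; ring
  have hibp := intervalIntegral.integral_mul_deriv_eq_deriv_mul
    (u := fun x : ℝ => fourier (-n) (x : AddCircle (2 * π)))
    (v := u) (u' := fun x => -Complex.I * n * fourier (-n) (x : AddCircle (2 * π))) (v' := u')
    (a := 0) (b := 2 * π)
    (fun x _ => hfd x) (fun x _ => hder x)
    (by apply Continuous.intervalIntegrable; exact (continuous_const.mul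
      ((fourier (-n)).continuous.comp (AddCircle.continuous_mk' _))))
    (hc'.intervalIntegrable _ _)
  have hbdry : fourier (-n) ((2 * π : ℝ) : AddCircle (2 * π)) * u (2 * π)
      = fourier (-n) ((0 : ℝ) : AddCircle (2 * π)) * u 0 := by
    have hc2 : ((2 * π : ℝ) : AddCircle (2 * π)) = ((0 : ℝ) : AddCircle (2 * π)) := by
      simpa using AddCircle.coe_add_period (2 * π) 0
    rw [hc2, ← zero_add (2 * π), hper 0]
  simp only [smul_eq_mul]
  rw [hibp, hbdry, sub_self, zero_sub]
  have h1 : (∫ x in (0:ℝ)..2*π, (fun x : ℝ => -Complex.I * n * fourier (-n) (x : AddCircle (2*π))) x * u x)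
      = -Complex.I * n * ∫ x in (0:ℝ)..2*π, fourier (-n) (x : AddCircle (2*π)) * u x := by
    rw [← intervalIntegral.integral_const_mul]
    apply intervalIntegral.integral_congr
    intro x _
    ring
  rw [h1]
  ring

lemma fourE (n : ℤ) (x : ℝ) :
    (fourier (-n) (x : AddCircle (2 * π)) : ℂ) = Complex.exp (-(n * x) * Complex.I) := by
  rw [fourier_coe_apply]
  congr 1
  have hπ : (π : ℂ) ≠ 0 := by exact_mod_cast Real.pi_ne_zero
  field_simp
  push_cast; ring

lemma wirtinger9 (q : ℝ → ℝ) (hq : ContDiff ℝ 1 q)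
    (hper : Function.Periodic q (2 * π))
    (h0 : ∫ x in (0:ℝ)..(2 * π), q x = 0)
    (h1c : ∫ x in (0:ℝ)..(2 * π), q x * Real.cos x = 0)
    (h1s : ∫ x in (0:ℝ)..(2 * π), q x * Real.sin x = 0)
    (hanti : ∀ x, q (x + π) = - q x) :
    9 * ∫ x in (0:ℝ)..(2 * π), q x ^ 2 ≤ ∫ x in (0:ℝ)..(2 * π), deriv q x ^ 2 := by
  have hqc : Continuous q := hq.continuous
  have hdq : ∀ x, HasDerivAt q (deriv q x) x := fun x =>
    ((hq.differentiable one_ne_zero) x).hasDerivAt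
  have hdc : Continuous (deriv q) := hq.continuous_deriv le_rfl
  have hperd : Function.Periodic (deriv q) (2 * π) := by
    intro x
    have h1 : HasDerivAt q (deriv q (x + 2 * π)) (x + 2 * π) := hdq _
    have h2 : HasDerivAt (fun y : ℝ => q (y + 2 * π)) (deriv q (x + 2 * π)) x := by
      simpa [Function.comp_def] using h1.comp x ((hasDerivAt_id x).add_const (2 * π))
    have h3 : HasDerivAt q (deriv q (x + 2 * π)) x := by
      have he : (fun y : ℝ => q (y + 2 * π)) = q := funext fun y => hper y
      rwa [he] at h2
    exact h3.deriv.symm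
  set u : ℝ → ℂ := fun x => (q x : ℂ) with hu
  set v : ℝ → ℂ := fun x => ((deriv q x : ℝ) : ℂ) with hv
  have huc : Continuous u := Complex.continuous_ofReal.comp hqc
  have hvc : Continuous v := Complex.continuous_ofReal.comp hdc
  have hperu : Function.Periodic u (2 * π) := fun x => by simp [hu, hper x]
  have hperv : Function.Periodic v (2 * π) := fun x => by simp [hv, hperd x]
  have hderu : ∀ x, HasDerivAt u (v x) x := fun x => (hdq x).ofReal_comp
  set c : ℤ → ℂ := fun n => fourierCoeff (AddCircle.liftIco (2 * π) 0 u) n with hc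
  set d : ℤ → ℂ := fun n => fourierCoeff (AddCircle.liftIco (2 * π) 0 v) n with hd
  have hdrel : ∀ n, d n = (Complex.I * n) * c n := fun n =>
    coeff_deriv u v hderu hvc hperu hperv n
  -- vanishing of c at 0, ±1, and even n
  have hc0 : c 0 = 0 := by
    simp only [hc]
    rw [coeff_eq u hperu 0]
    have : ∫ x in (0:ℝ)..(2 * π), (fourier (-(0:ℤ)) (x : AddCircle (2 * π))) • u x
        = ∫ x in (0:ℝ)..(2 * π), u x := by
      apply intervalIntegral.integral_congr
      intro x _
      simp
    rw [this, hu]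
    rw [intervalIntegral.integral_ofReal, h0]
    simp
  have hcpm1 : ∀ n : ℤ, n = 1 ∨ n = -1 → c n = 0 := by
    intro n hn
    simp only [hc]
    rw [coeff_eq u hperu n]
    have key : ∫ x in (0:ℝ)..(2 * π), (fourier (-n) (x : AddCircle (2 * π))) • u x = 0 := by
      have e1 : ∀ x : ℝ, (fourier (-n) (x : AddCircle (2 * π))) • u x
          = ((q x * Real.cos x : ℝ) : ℂ) - ((q x * Real.sin x * (n : ℝ) : ℝ) : ℂ) * Complex.I := by
        intro x
        rw [smul_eq_mul, fourE n x]
        rcases hn with h | h <;> subst h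
        · have h2 : (-((((1:ℤ)):ℂ) * x) * Complex.I) = ((-x : ℝ) : ℂ) * Complex.I := by
            push_cast; ring
          rw [h2, Complex.exp_mul_I, ← Complex.ofReal_cos, ← Complex.ofReal_sin,
            Real.cos_neg, Real.sin_neg]
          push_cast; ring
        · have h2 : (-((((-1:ℤ)):ℂ) * x) * Complex.I) = ((x : ℝ) : ℂ) * Complex.I := by
            push_cast; ring
          rw [h2, Complex.exp_mul_I, ← Complex.ofReal_cos, ← Complex.ofReal_sin]
          push_cast; ring
      rw [intervalIntegral.integral_congr (fun x _ => e1 x)]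
      rw [intervalIntegral.integral_sub, intervalIntegral.integral_mul_const,
        intervalIntegral.integral_ofReal, intervalIntegral.integral_ofReal]
      · have hs : ∫ x in (0:ℝ)..(2*π), q x * Real.sin x * (n:ℝ) = 0 := by
          rw [intervalIntegral.integral_mul_const, h1s, zero_mul]
        rw [h1c, hs]
        simp
      · exact (Complex.continuous_ofReal.comp
          ((hqc.mul Real.continuous_cos))).intervalIntegrable _ _
      · exact ((Complex.continuous_ofReal.comp
          ((hqc.mul Real.continuous_sin).mul continuous_const)).mul
          continuous_const).intervalIntegrable _ _
    rw [key]
    simp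
  have hceven : ∀ n : ℤ, Even n → c n = 0 := by
    intro n hn
    simp only [hc]
    rw [coeff_eq u hperu n]
    set h : ℝ → ℂ := fun x => (fourier (-n) (x : AddCircle (2 * π))) • u x with hh
    have hhc : Continuous h := by
      apply Continuous.smul (f := fun x : ℝ => fourier (-n) (x : AddCircle (2 * π))) (g := u)
      · exact (fourier (-n)).continuous.comp (AddCircle.continuous_mk' _)
      · exact huc
    have hneg : ∀ x : ℝ, h (x + π) = - h x := by
      intro x
      obtain ⟨m, hm⟩ := hn
      rw [hh]
      simp only [smul_eq_mul]
      have hu2 : u (x + π) = - u x := by simp [hu, hanti x]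
      rw [hu2, fourE, fourE]
      have hsplit : (-(((n:ℂ)) * ((x + π : ℝ) : ℂ)) * Complex.I)
          = (-((n:ℂ) * x) * Complex.I) + ((-m : ℤ) : ℂ) * (2 * ↑π * Complex.I) := by
        subst hm; push_cast; ring
      rw [hsplit, Complex.exp_add, Complex.exp_int_mul_two_pi_mul_I]
      ring
    have hsh : ∫ x in (π:ℝ)..(2 * π), h x = - ∫ x in (0:ℝ)..π, h x := by
      have h1 : ∫ x in (0:ℝ)..π, h (x + π) = ∫ x in (0+π:ℝ)..(π+π), h x :=
        intervalIntegral.integral_comp_add_right h π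
      rw [zero_add] at h1
      have h2 : (π + π : ℝ) = 2 * π := by ring
      rw [h2] at h1
      rw [← h1]
      rw [intervalIntegral.integral_congr (fun x _ => hneg x)]
      exact intervalIntegral.integral_neg
    have hadd : (∫ x in (0:ℝ)..π, h x) + ∫ x in (π:ℝ)..(2 * π), h x
        = ∫ x in (0:ℝ)..(2 * π), h x :=
      intervalIntegral.integral_add_adjacent_intervals
        (hhc.intervalIntegrable _ _) (hhc.intervalIntegrable _ _)
    have : ∫ x in (0:ℝ)..(2 * π), h x = 0 := by
      rw [← hadd, hsh]; ring
    rw [this]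
    simp
  -- Parseval for u and v
  obtain ⟨hsa, hpa⟩ := parseval_lift u huc hperu
  obtain ⟨hsb, hpb⟩ := parseval_lift v hvc hperv
  have hnormu : ∀ x : ℝ, ‖u x‖ ^ 2 = q x ^ 2 := by
    intro x; rw [hu]; simp [Complex.norm_real, sq_abs]
  have hnormv : ∀ x : ℝ, ‖v x‖ ^ 2 = deriv q x ^ 2 := by
    intro x; rw [hv]; simp [Complex.norm_real, sq_abs]
  have hIu : ∫ x in (0:ℝ)..(2 * π), ‖u x‖ ^ 2 = ∫ x in (0:ℝ)..(2 * π), q x ^ 2 :=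
    intervalIntegral.integral_congr (fun x _ => hnormu x)
  have hIv : ∫ x in (0:ℝ)..(2 * π), ‖v x‖ ^ 2 = ∫ x in (0:ℝ)..(2 * π), deriv q x ^ 2 :=
    intervalIntegral.integral_congr (fun x _ => hnormv x)
  rw [hIu] at hpa
  rw [hIv] at hpb
  have key : ∀ n : ℤ, 9 * ‖c n‖ ^ 2 ≤ ‖d n‖ ^ 2 := by
    intro n
    by_cases hzero : c n = 0
    · rw [hzero]
      simp only [norm_zero]
      nlinarith [sq_nonneg ‖d n‖, norm_nonneg (d n)]
    · have hb : ‖d n‖ ^ 2 = (n : ℝ) ^ 2 * ‖c n‖ ^ 2 := by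
        rw [hdrel n, norm_mul, norm_mul, Complex.norm_I, one_mul, Complex.norm_intCast]
        rw [mul_pow, sq_abs]
      have hodd : ¬ Even n := fun h => hzero (hceven n h)
      have hn1 : n ≠ 1 := fun h => hzero (hcpm1 n (Or.inl h))
      have hnm1 : n ≠ -1 := fun h => hzero (hcpm1 n (Or.inr h))
      have h9 : (9 : ℝ) ≤ (n : ℝ) ^ 2 := by
        have h3 : 3 ≤ n ∨ n ≤ -3 := by
          rcases Int.even_or_odd n with he | ho
          · exact absurd he hodd
          · obtain ⟨k, hk⟩ := ho; omega
        have h9' : (9 : ℤ) ≤ n ^ 2 := by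
          rcases h3 with h | h <;> nlinarith
        exact_mod_cast h9'
      rw [hb]
      exact mul_le_mul_of_nonneg_right h9 (by positivity)
  have hsum9 : Summable fun n : ℤ => 9 * ‖c n‖ ^ 2 := hsa.mul_left 9
  have hts : ∑' n : ℤ, 9 * ‖c n‖ ^ 2 ≤ ∑' n : ℤ, ‖d n‖ ^ 2 := Summable.tsum_le_tsum key hsum9 hsb
  rw [tsum_mul_left] at hts
  have hπ : (0 : ℝ) < 2 * π := by positivity
  nlinarith [hts, hpa, hpb]

/-- Proposition 3.2: for convex sets of constant width,
`Δ ≥ (32/9)π(A − F)`. -/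
theorem isoperimetric_deficit_ge_constant_width
    (p : ℝ → ℝ)
    (hper : Function.Periodic p (2 * π))
    (hC2 : ContDiff ℝ 2 p)
    (hconv : ∀ φ, p φ + deriv (deriv p) φ > 0)
    (hcos : ∫ φ in (0:ℝ)..(2 * π), p φ * Real.cos φ = 0)
    (hsin : ∫ φ in (0:ℝ)..(2 * π), p φ * Real.sin φ = 0)
    (w : ℝ) (hwidth : ∀ φ, p φ + p (φ + π) = w)
    (L F A Δ : ℝ)
    (hL : L = ∫ φ in (0:ℝ)..(2 * π), p φ)
    (hF : F = (1 / 2) * ∫ φ in (0:ℝ)..(2 * π), (p φ ^ 2 - (deriv p φ) ^ 2))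
    (hA : A = (1 / 2) * ∫ φ in (0:ℝ)..(2 * π), p φ ^ 2)
    (hΔ : Δ = L ^ 2 - 4 * π * F) :
    Δ ≥ (32 / 9) * π * (A - F) := by
  have hπ : (0:ℝ) < π := Real.pi_pos
  have hpc : Continuous p := hC2.continuous
  have hdc : Continuous (deriv p) := hC2.continuous_deriv (by norm_num)
  set c : ℝ := L / (2 * π) with hcdef
  have hcL : 2 * π * c = L := by
    rw [hcdef]; field_simp
  set q : ℝ → ℝ := fun φ => p φ - c with hqdef
  have hq1 : ContDiff ℝ 1 q := (hC2.of_le (by norm_num)).sub contDiff_const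
  have hqper : Function.Periodic q (2 * π) := fun x => by simp [hqdef, hper x]
  have hderq : deriv q = deriv p := by
    funext x
    rw [hqdef]
    exact deriv_sub_const c
  -- w = L / π
  have hintshift : ∫ φ in (0:ℝ)..(2 * π), p (φ + π) = L := by
    have h1 : ∫ φ in (0:ℝ)..(2 * π), p (φ + π) = ∫ φ in (0 + π:ℝ)..(2 * π + π), p φ :=
      intervalIntegral.integral_comp_add_right p π
    rw [zero_add] at h1
    have h2 : (2 * π + π : ℝ) = π + 2 * π := by ring
    rw [h2] at h1
    rw [h1, hper.intervalIntegral_add_eq π 0, zero_add, hL]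
  have hwL : w * (2 * π) = 2 * L := by
    have h1 : ∫ φ in (0:ℝ)..(2 * π), (p φ + p (φ + π)) = L + L := by
      rw [intervalIntegral.integral_add (f := p) (g := fun φ => p (φ + π))
        (hpc.intervalIntegrable _ _)
        ((by fun_prop : Continuous fun φ : ℝ => p (φ + π)).intervalIntegrable _ _),
        hintshift, ← hL]
    have h2 : ∫ φ in (0:ℝ)..(2 * π), (p φ + p (φ + π)) = w * (2 * π) := by
      rw [intervalIntegral.integral_congr (g := fun _ => w) (fun x _ => hwidth x)]
      simp [mul_comm]
    linarith [h1, h2]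
  have hanti : ∀ x, q (x + π) = - q x := by
    intro x
    have h1 := hwidth x
    have : w = 2 * c := by
      nlinarith [hwL, hcL, hπ]
    simp only [hqdef]
    linarith [h1, this]
  have h0 : ∫ x in (0:ℝ)..(2 * π), q x = 0 := by
    simp only [hqdef]
    rw [intervalIntegral.integral_sub (hpc.intervalIntegrable _ _)
      (intervalIntegrable_const), ← hL, intervalIntegral.integral_const, smul_eq_mul]
    linarith [hcL]
  have hcos2pi : ∫ x in (0:ℝ)..(2 * π), Real.cos x = 0 := by
    rw [integral_cos, Real.sin_two_pi, Real.sin_zero, sub_zero]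
  have hsin2pi : ∫ x in (0:ℝ)..(2 * π), Real.sin x = 0 := by
    rw [integral_sin, Real.cos_two_pi, Real.cos_zero, sub_self]
  have h1c : ∫ x in (0:ℝ)..(2 * π), q x * Real.cos x = 0 := by
    simp only [hqdef, sub_mul]
    rw [intervalIntegral.integral_sub (f := fun x => p x * Real.cos x) (g := fun x => c * Real.cos x) ((hpc.mul Real.continuous_cos).intervalIntegrable _ _)
      ((continuous_const.mul Real.continuous_cos).intervalIntegrable _ _),
      hcos, intervalIntegral.integral_const_mul, hcos2pi]
    ring
  have h1s : ∫ x in (0:ℝ)..(2 * π), q x * Real.sin x = 0 := by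
    simp only [hqdef, sub_mul]
    rw [intervalIntegral.integral_sub (f := fun x => p x * Real.sin x) (g := fun x => c * Real.sin x) ((hpc.mul Real.continuous_sin).intervalIntegrable _ _)
      ((continuous_const.mul Real.continuous_sin).intervalIntegrable _ _),
      hsin, intervalIntegral.integral_const_mul, hsin2pi]
    ring
  have hwir := wirtinger9 q hq1 hqper h0 h1c h1s hanti
  rw [hderq] at hwir
  -- turn integral identities into algebra
  set Iq : ℝ := ∫ x in (0:ℝ)..(2 * π), q x ^ 2 with hIq
  set Y : ℝ := ∫ x in (0:ℝ)..(2 * π), deriv p x ^ 2 with hY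
  have hIp : ∫ x in (0:ℝ)..(2 * π), p x ^ 2 = Iq + 2 * c * L - 2 * π * c ^ 2 := by
    have hexp : ∀ x ∈ Set.uIcc (0:ℝ) (2 * π), p x ^ 2 = q x ^ 2 + 2 * c * p x - c ^ 2 := by
      intro x _
      simp only [hqdef]
      ring
    rw [intervalIntegral.integral_congr hexp]
    rw [intervalIntegral.integral_sub, intervalIntegral.integral_add]
    · rw [intervalIntegral.integral_const_mul, ← hL, intervalIntegral.integral_const,
        smul_eq_mul]
      ring
    · exact ((hpc.sub continuous_const).pow 2).intervalIntegrable _ _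
    · exact (continuous_const.mul hpc).intervalIntegrable _ _
    · exact (((hpc.sub continuous_const).pow 2).add
        (continuous_const.mul hpc)).intervalIntegrable _ _
    · exact intervalIntegrable_const
  have hFsplit : ∫ x in (0:ℝ)..(2 * π), (p x ^ 2 - deriv p x ^ 2)
      = (Iq + 2 * c * L - 2 * π * c ^ 2) - Y := by
    rw [intervalIntegral.integral_sub (f := fun x => p x ^ 2) (g := fun x => deriv p x ^ 2) ((hpc.pow 2).intervalIntegrable _ _)
      ((hdc.pow 2).intervalIntegrable _ _), hIp]
  rw [hΔ, hF, hA, hFsplit, hIp]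
  rw [← hcL]
  nlinarith [hwir, hπ, sq_nonneg c]
end

section
/- Let p(φ) = a₀ + a₂cos(2φ) + b₂sin(2φ) with a₂² + b₂² ≠ 0, and suppose p(φ) + p''(φ) > 0 for all φ (so p is the support function of a closed convex curve C of length L = ∫₀^{2π} p dφ = 2πa₀). Then a₀ > 0, and the interior parallel curve to C at distance L/(2π) = a₀, namely the curve with generalized support function q = p − a₀ parametrized by φ ↦ (q(φ)cos φ − q'(φ)sin φ, q(φ)sin φ + q'(φ)cos φ), is an astroid: there exist a ≠ 0 and an angle θ such that its image equals the image of the astroid ψ ↦ (2a sin³ψ, 2a cos³ψ) rotated by θ about the origin. -/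
open Real

/-- Proposition 4.1: if `p(φ) = a₀ + a₂ cos 2φ + b₂ sin 2φ` with
`a₂² + b₂² ≠ 0` is the support function of a closed convex curve `C` of
length `L`, then `a₀ > 0`, `L = 2πa₀`, and the interior parallel curve to `C`
at distance `L/(2π)` is (a rotated copy of) an astroid. -/
theorem parallel_curve_is_astroid
    (a₀ a₂ b₂ : ℝ) (p q : ℝ → ℝ) (L : ℝ)
    (hp : ∀ φ, p φ = a₀ + a₂ * Real.cos (2 * φ) + b₂ * Real.sin (2 * φ))
    (hne : a₂ ^ 2 + b₂ ^ 2 ≠ 0)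
    (hconv : ∀ φ, p φ + deriv (deriv p) φ > 0)
    (hL : L = ∫ φ in (0:ℝ)..(2 * π), p φ)
    (hq : ∀ φ, q φ = p φ - L / (2 * π)) :
    0 < a₀ ∧ L = 2 * π * a₀ ∧
      ∃ a : ℝ, a ≠ 0 ∧ ∃ θ : ℝ,
        (Set.range fun φ : ℝ =>
          ((q φ * Real.cos φ - deriv q φ * Real.sin φ,
            q φ * Real.sin φ + deriv q φ * Real.cos φ) : ℝ × ℝ)) =
        (Set.range fun ψ : ℝ =>
          ((2 * a * Real.sin ψ ^ 3 * Real.cos θ -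
              2 * a * Real.cos ψ ^ 3 * Real.sin θ,
            2 * a * Real.sin ψ ^ 3 * Real.sin θ +
              2 * a * Real.cos ψ ^ 3 * Real.cos θ) : ℝ × ℝ)) := by

  -- polar coordinates for (a₂, b₂)
  have h0 : (0:ℝ) < a₂ ^ 2 + b₂ ^ 2 := lt_of_le_of_ne (by positivity) (Ne.symm hne)
  obtain ⟨R, α, hRpos, ha₂, hb₂⟩ :
      ∃ R α : ℝ, 0 < R ∧ a₂ = R * Real.cos α ∧ b₂ = R * Real.sin α := by
    set z : ℂ := ⟨a₂, b₂⟩ with hzdef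
    have hz : z ≠ 0 := by
      intro hcon
      have h1 : a₂ = 0 := by simpa [hzdef] using congrArg Complex.re hcon
      have h2 : b₂ = 0 := by simpa [hzdef] using congrArg Complex.im hcon
      exact hne (by rw [h1, h2]; ring)
    have habs : ‖z‖ = Real.sqrt (a₂ ^ 2 + b₂ ^ 2) := by
      rw [Complex.norm_def, hzdef, Complex.normSq_mk]
      congr 1; ring
    have hs0 : Real.sqrt (a₂ ^ 2 + b₂ ^ 2) ≠ 0 := ne_of_gt (Real.sqrt_pos.mpr h0)
    refine ⟨Real.sqrt (a₂ ^ 2 + b₂ ^ 2), z.arg, Real.sqrt_pos.mpr h0, ?_, ?_⟩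
    · have hc := Complex.cos_arg hz
      rw [habs] at hc
      have hre : z.re = a₂ := rfl
      rw [hc, hre]
      field_simp
    · have hc := Complex.sin_arg z
      rw [habs] at hc
      have him : z.im = b₂ := rfl
      rw [hc, him]
      field_simp
  have hπ : (π:ℝ) ≠ 0 := Real.pi_ne_zero
  have hpfun : p = fun φ => a₀ + a₂ * Real.cos (2 * φ) + b₂ * Real.sin (2 * φ) := funext hp
  have h2x : ∀ x : ℝ, HasDerivAt (fun y : ℝ => 2 * y) 2 x := fun x => by
    simpa using (hasDerivAt_id x).const_mul (2:ℝ)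
  -- first derivative of p
  have hp1 : ∀ x : ℝ, HasDerivAt p ((-2*a₂) * Real.sin (2*x) + (2*b₂) * Real.cos (2*x)) x := by
    intro x
    rw [hpfun]
    have h := ((hasDerivAt_const x a₀).add (((h2x x).cos).const_mul a₂)).add
      (((h2x x).sin).const_mul b₂)
    have hval : (-2*a₂) * Real.sin (2*x) + (2*b₂) * Real.cos (2*x)
        = 0 + a₂ * (-Real.sin (2*x) * 2) + b₂ * (Real.cos (2*x) * 2) := by ring
    rw [hval]
    exact h
  have hderp : deriv p = fun x => (-2*a₂) * Real.sin (2*x) + (2*b₂) * Real.cos (2*x) :=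
    funext fun x => (hp1 x).deriv
  have hp2 : ∀ x : ℝ, HasDerivAt (deriv p)
      ((-4*a₂) * Real.cos (2*x) + (-4*b₂) * Real.sin (2*x)) x := by
    intro x
    rw [hderp]
    have h := (((h2x x).sin).const_mul (-2*a₂)).add (((h2x x).cos).const_mul (2*b₂))
    have hval : (-4*a₂) * Real.cos (2*x) + (-4*b₂) * Real.sin (2*x)
        = (-2*a₂) * (Real.cos (2*x) * 2) + (2*b₂) * (-Real.sin (2*x) * 2) := by ring
    rw [hval]
    exact h
  have hppx : ∀ x : ℝ, deriv (deriv p) x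
      = (-4*a₂) * Real.cos (2*x) + (-4*b₂) * Real.sin (2*x) := fun x => (hp2 x).deriv
  -- a₀ > 3R > 0
  have hRR : a₂ * Real.cos α + b₂ * Real.sin α = R := by
    rw [ha₂, hb₂]
    linear_combination R * Real.sin_sq_add_cos_sq α
  have ha₀ : 0 < a₀ := by
    have h := hconv (α/2)
    rw [hp (α/2), hppx (α/2), show (2:ℝ) * (α/2) = α by ring] at h
    nlinarith [h, hRR, hRpos]
  -- length
  have hpc : Continuous p := by
    rw [hpfun]; fun_prop
  have hLval : L = 2 * π * a₀ := by
    have hFder : ∀ x ∈ Set.uIcc (0:ℝ) (2*π),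
        HasDerivAt (fun y => a₀ * y + (a₂/2) * Real.sin (2*y) - (b₂/2) * Real.cos (2*y))
          (p x) x := by
      intro x _
      have h := (((hasDerivAt_id x).const_mul a₀).add (((h2x x).sin).const_mul (a₂/2))).sub
        (((h2x x).cos).const_mul (b₂/2))
      have hval : p x = a₀ * 1 + a₂/2 * (Real.cos (2*x) * 2) - b₂/2 * (-Real.sin (2*x) * 2) := by
        rw [hp x]; ring
      rw [hval]
      exact h
    rw [hL, intervalIntegral.integral_eq_sub_of_hasDerivAt hFder (hpc.intervalIntegrable _ _)]
    have hs4 : Real.sin (2*(2*π)) = 0 := by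
      have h := Real.sin_nat_mul_pi 4
      push_cast at h
      rw [show (2:ℝ)*(2*π) = 4*π by ring]
      exact h
    have hc4 : Real.cos (2*(2*π)) = 1 := by
      have h := Real.cos_nat_mul_two_pi 2
      push_cast at h
      exact h
    rw [hs4, hc4]
    norm_num
    ring
  have hLdiv : L / (2*π) = a₀ := by
    rw [hLval, show (2:ℝ)*π*a₀ = a₀*(2*π) by ring,
      mul_div_cancel_right₀ _ (by positivity : (2:ℝ)*π ≠ 0)]
  -- q and its derivative
  have hqfun : q = fun x => a₂ * Real.cos (2*x) + b₂ * Real.sin (2*x) :=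
    funext fun x => by rw [hq x, hp x, hLdiv]; ring
  have hq1 : ∀ x : ℝ, HasDerivAt q ((-2*a₂) * Real.sin (2*x) + (2*b₂) * Real.cos (2*x)) x := by
    intro x
    rw [hqfun]
    have h := (((h2x x).cos).const_mul a₂).add (((h2x x).sin).const_mul b₂)
    have hval : (-2*a₂) * Real.sin (2*x) + (2*b₂) * Real.cos (2*x)
        = a₂ * (-Real.sin (2*x) * 2) + b₂ * (Real.cos (2*x) * 2) := by ring
    rw [hval]
    exact h
  have hqx : ∀ x : ℝ, q x = a₂ * Real.cos (2*x) + b₂ * Real.sin (2*x) :=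
    fun x => by rw [hqfun]
  have hq'x : ∀ x : ℝ, deriv q x = (-2*a₂) * Real.sin (2*x) + (2*b₂) * Real.cos (2*x) :=
    fun x => (hq1 x).deriv
  -- half-angle forms
  have hcosα : Real.cos α = 2 * Real.cos (α/2) ^ 2 - 1 := by
    rw [← Real.cos_two_mul]
    congr 1; ring
  have hsinα : Real.sin α = 2 * Real.sin (α/2) * Real.cos (α/2) := by
    rw [← Real.sin_two_mul]
    congr 1; ring
  have ha₂' : a₂ = R * (2 * Real.cos (α/2) ^ 2 - 1) := by rw [ha₂, hcosα]
  have hb₂' : b₂ = R * (2 * Real.sin (α/2) * Real.cos (α/2)) := by rw [hb₂, hsinα]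
  refine ⟨ha₀, hLval, R, ne_of_gt hRpos, α/2 + π/4, ?_⟩
  -- the master pointwise identity
  have M : ∀ φ : ℝ,
      ((q φ * Real.cos φ - deriv q φ * Real.sin φ,
        q φ * Real.sin φ + deriv q φ * Real.cos φ) : ℝ × ℝ)
      = (2 * R * Real.sin (φ - α/2 + 3*π/4) ^ 3 * Real.cos (α/2 + π/4) -
           2 * R * Real.cos (φ - α/2 + 3*π/4) ^ 3 * Real.sin (α/2 + π/4),
         2 * R * Real.sin (φ - α/2 + 3*π/4) ^ 3 * Real.sin (α/2 + π/4) +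
           2 * R * Real.cos (φ - α/2 + 3*π/4) ^ 3 * Real.cos (α/2 + π/4)) := by
    intro φ
    have hsψ : Real.sin (φ - α/2 + 3*π/4)
        = Real.sqrt 2/2 * ((Real.cos φ * Real.cos (α/2) + Real.sin φ * Real.sin (α/2))
            - (Real.sin φ * Real.cos (α/2) - Real.cos φ * Real.sin (α/2))) := by
      rw [show φ - α/2 + 3*π/4 = (φ - α/2) + (π - π/4) by ring, Real.sin_add,
        Real.sin_pi_sub, Real.cos_pi_sub, Real.sin_sub, Real.cos_sub,
        Real.sin_pi_div_four, Real.cos_pi_div_four]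
      ring
    have hcψ : Real.cos (φ - α/2 + 3*π/4)
        = -(Real.sqrt 2/2) * ((Real.cos φ * Real.cos (α/2) + Real.sin φ * Real.sin (α/2))
            + (Real.sin φ * Real.cos (α/2) - Real.cos φ * Real.sin (α/2))) := by
      rw [show φ - α/2 + 3*π/4 = (φ - α/2) + (π - π/4) by ring, Real.cos_add,
        Real.sin_pi_sub, Real.cos_pi_sub, Real.sin_sub, Real.cos_sub,
        Real.sin_pi_div_four, Real.cos_pi_div_four]
      ring
    have hsθ : Real.sin (α/2 + π/4)
        = Real.sqrt 2/2 * (Real.cos (α/2) + Real.sin (α/2)) := by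
      rw [Real.sin_add, Real.sin_pi_div_four, Real.cos_pi_div_four]
      ring
    have hcθ : Real.cos (α/2 + π/4)
        = Real.sqrt 2/2 * (Real.cos (α/2) - Real.sin (α/2)) := by
      rw [Real.cos_add, Real.sin_pi_div_four, Real.cos_pi_div_four]
      ring
    have hpyth : Real.sin φ ^ 2 + Real.cos φ ^ 2 = 1 := Real.sin_sq_add_cos_sq φ
    have huv : Real.sin (α/2) ^ 2 + Real.cos (α/2) ^ 2 = 1 := Real.sin_sq_add_cos_sq (α/2)
    have ht : Real.sqrt 2 ^ 2 = 2 := Real.sq_sqrt (by norm_num)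
    rw [hqx φ, hq'x φ, hsψ, hcψ, hsθ, hcθ, ha₂', hb₂', Real.cos_two_mul, Real.sin_two_mul]
    simp only [Prod.mk.injEq]
    constructor
    · linear_combination (R * ((-1 : ℝ) * (Real.sin φ) * (Real.cos (α/2)) * (Real.sin (α/2))^3 * (Real.sqrt 2)^4 + (-1 : ℝ) * (Real.sin φ) * (Real.cos (α/2))^3 * (Real.sin (α/2)) * (Real.sqrt 2)^4 + (-4 : ℝ) * (Real.cos φ) + (3/4 : ℝ) * (Real.cos φ) * (Real.sin (α/2))^4 * (Real.sqrt 2)^4 + (8 : ℝ) * (Real.cos φ) * (Real.cos (α/2))^2 + (-3/4 : ℝ) * (Real.cos φ) * (Real.cos (α/2))^4 * (Real.sqrt 2)^4)) * hpyth + (R * ((-1 : ℝ) * (Real.sin φ) * (Real.cos (α/2)) * (Real.sin (α/2)) * (Real.sqrt 2)^4 + (3/2 : ℝ) * (Real.cos φ) * (Real.sqrt 2)^2 + (3/4 : ℝ) * (Real.cos φ) * (Real.sin (α/2))^2 * (Real.sqrt 2)^4 + (-3/2 : ℝ) * (Real.cos φ) * (Real.cos (α/2))^2 * (Real.sqrt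 2)^2 + (1 : ℝ) * (Real.cos φ)^2 * (Real.sin φ) * (Real.cos (α/2)) * (Real.sin (α/2)) * (Real.sqrt 2)^4 + (-1 : ℝ) * (Real.cos φ)^3 * (Real.sqrt 2)^2 + (-1/2 : ℝ) * (Real.cos φ)^3 * (Real.sin (α/2))^2 * (Real.sqrt 2)^4 + (1 : ℝ) * (Real.cos φ)^3 * (Real.cos (α/2))^2 * (Real.sqrt 2)^2)) * huv + (R * ((-2 : ℝ) * (Real.sin φ) * (Real.cos (α/2)) * (Real.sin (α/2)) + (-1 : ℝ) * (Real.sin φ) * (Real.cos (α/2)) * (Real.sin (α/2)) * (Real.sqrt 2)^2 + (3/2 : ℝ) * (Real.cos φ) + (3/4 : ℝ) * (Real.cos φ) * (Real.sin (α/2))^2 * (Real.sqrt 2)^2 + (-3 : ℝ) * (Real.cos φ) * (Real.cos (α/2))^2 + (-3/4 : ℝ) * (Real.cos φ) * (Real.cos (α/2))^2 * (Real.sin (α/2))^2 * (Real.sqrt 2)^2 + (-3/4 : ℝ) * (Real.cos φ) * (Real.cos (α/2))^4 * (Real.sqrt 2)^2 + (2 : ℝ) * (Real.cos φ)^2 *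 (Real.sin φ) * (Real.cos (α/2)) * (Real.sin (α/2)) + (1 : ℝ) * (Real.cos φ)^2 * (Real.sin φ) * (Real.cos (α/2)) * (Real.sin (α/2)) * (Real.sqrt 2)^2 + (-1 : ℝ) * (Real.cos φ)^3 + (-1/2 : ℝ) * (Real.cos φ)^3 * (Real.sin (α/2))^2 * (Real.sqrt 2)^2 + (2 : ℝ) * (Real.cos φ)^3 * (Real.cos (α/2))^2 + (1/2 : ℝ) * (Real.cos φ)^3 * (Real.cos (α/2))^2 * (Real.sin (α/2))^2 * (Real.sqrt 2)^2 + (1/2 : ℝ) * (Real.cos φ)^3 * (Real.cos (α/2))^4 * (Real.sqrt 2)^2)) * ht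
    · linear_combination (R * ((-1/4 : ℝ) * (Real.sin φ) * (Real.sin (α/2))^4 * (Real.sqrt 2)^4 + (1/4 : ℝ) * (Real.sin φ) * (Real.cos (α/2))^4 * (Real.sqrt 2)^4 + (4 : ℝ) * (Real.cos φ) * (Real.cos (α/2)) * (Real.sin (α/2)))) * hpyth + (R * ((-1/2 : ℝ) * (Real.sin φ) * (Real.sqrt 2)^2 + (-1/4 : ℝ) * (Real.sin φ) * (Real.sin (α/2))^2 * (Real.sqrt 2)^4 + (1/2 : ℝ) * (Real.sin φ) * (Real.cos (α/2))^2 * (Real.sqrt 2)^2 + (-1 : ℝ) * (Real.cos φ)^2 * (Real.sin φ) * (Real.sqrt 2)^2 + (-1/2 : ℝ) * (Real.cos φ)^2 * (Real.sin φ) * (Real.sin (α/2))^2 * (Real.sqrt 2)^4 + (1 : ℝ) * (Real.cos φ)^2 * (Real.sin φ) * (Real.cos (α/2))^2 * (Real.sqrt 2)^2 + (-1 : ℝ) * (Real.cos φ)^3 * (Real.cos (α/2)) * (Real.sin (α/2)) * (Real.sqrt 2)^4)) * huv + (R * ((-1/2 : ℝ) * (Real.sin φ) + (-1/4 : ℝ)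 * (Real.sin φ) * (Real.sin (α/2))^2 * (Real.sqrt 2)^2 + (1 : ℝ) * (Real.sin φ) * (Real.cos (α/2))^2 + (1/4 : ℝ) * (Real.sin φ) * (Real.cos (α/2))^2 * (Real.sin (α/2))^2 * (Real.sqrt 2)^2 + (1/4 : ℝ) * (Real.sin φ) * (Real.cos (α/2))^4 * (Real.sqrt 2)^2 + (-1 : ℝ) * (Real.cos φ)^2 * (Real.sin φ) + (-1/2 : ℝ) * (Real.cos φ)^2 * (Real.sin φ) * (Real.sin (α/2))^2 * (Real.sqrt 2)^2 + (2 : ℝ) * (Real.cos φ)^2 * (Real.sin φ) * (Real.cos (α/2))^2 + (1/2 : ℝ) * (Real.cos φ)^2 * (Real.sin φ) * (Real.cos (α/2))^2 * (Real.sin (α/2))^2 * (Real.sqrt 2)^2 + (1/2 : ℝ) * (Real.cos φ)^2 * (Real.sin φ) * (Real.cos (α/2))^4 * (Real.sqrt 2)^2 + (-2 : ℝ) * (Real.cos φ)^3 * (Real.cos (α/2)) * (Real.sin (α/2)) + (-1 : ℝ) * (Real.cos φ)^3 * (Real.cos (α/2)) * (Real.sin (α/2)) * (Real.sqrt 2)^2))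 * ht
  ext pt
  simp only [Set.mem_range]
  constructor
  · rintro ⟨φ, rfl⟩
    exact ⟨φ - α/2 + 3*π/4, (M φ).symm⟩
  · rintro ⟨ψ, rfl⟩
    refine ⟨ψ + α/2 - 3*π/4, ?_⟩
    have h := M (ψ + α/2 - 3*π/4)
    rw [show ψ + α/2 - 3*π/4 - α/2 + 3*π/4 = ψ by ring] at h
    exact h
end

section
/- Let p(φ) = a₃cos(3φ) + b₃sin(3φ) with a₃² + b₃² ≠ 0 be the generalized support function of a closed curve C, i.e. C is parametrized by φ ↦ (p(φ)cos φ − p'(φ)sin φ, p(φ)sin φ + p'(φ)cos φ). Then there exist a ≠ 0 and φ₀ such that p(φ) = a cos(3(φ − φ₀)) for all φ, and consequently C is a hypocycloid of three cusps: the image of C equals the image of the curve t ↦ (−2a cos t − a cos 2t, −2a sin t + a sin 2t) rotated by φ₀ about the origin. -/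
open Real

lemma hypo_key (a φ₀ s : ℝ) :
    ((a * Real.cos (3 * s)) * Real.cos (s + φ₀) -
        (-(3 * (a * Real.sin (3 * s)))) * Real.sin (s + φ₀),
      (a * Real.cos (3 * s)) * Real.sin (s + φ₀) +
        (-(3 * (a * Real.sin (3 * s)))) * Real.cos (s + φ₀)) =
    (((-2 * a * Real.cos (π - 2 * s) - a * Real.cos (2 * (π - 2 * s))) * Real.cos φ₀ -
        (-2 * a * Real.sin (π - 2 * s) + a * Real.sin (2 * (π - 2 * s))) * Real.sin φ₀,
      (-2 * a * Real.cos (π - 2 * s) - a * Real.cos (2 * (π - 2 * s))) * Real.sin φ₀ +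
        (-2 * a * Real.sin (π - 2 * s) + a * Real.sin (2 * (π - 2 * s))) * Real.cos φ₀)) := by
  simp only [Real.cos_three_mul, Real.sin_three_mul, Real.cos_two_mul, Real.sin_two_mul,
    Real.cos_pi_sub, Real.sin_pi_sub, Real.cos_add, Real.sin_add, Prod.mk.injEq]
  constructor
  · linear_combination (-12 * a * Real.cos s * Real.sin s * Real.sin φ₀
      - 12 * a * Real.sin s ^ 2 * Real.cos φ₀ + 12 * a * Real.cos s ^ 2 * Real.cos φ₀
      - 3 * a * Real.cos φ₀) * (Real.sin_sq_add_cos_sq s)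
  · linear_combination (12 * a * Real.cos s * Real.sin s * Real.cos φ₀
      - 12 * a * Real.sin s ^ 2 * Real.sin φ₀ + 12 * a * Real.cos s ^ 2 * Real.sin φ₀
      - 3 * a * Real.sin φ₀) * (Real.sin_sq_add_cos_sq s)

/-- Proposition 4.4: a closed curve with generalized support function
`p(φ) = a₃ cos 3φ + b₃ sin 3φ`, `a₃² + b₃² ≠ 0`, satisfies
`p(φ) = a cos(3(φ − φ₀))` for some `a ≠ 0, φ₀`, and is a hypocycloid of
three cusps (a rotated copy of the standard one). -/
theorem curve_is_hypocycloid_of_three_cusps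
    (a₃ b₃ : ℝ) (p : ℝ → ℝ)
    (hp : ∀ φ, p φ = a₃ * Real.cos (3 * φ) + b₃ * Real.sin (3 * φ))
    (hne : a₃ ^ 2 + b₃ ^ 2 ≠ 0) :
    ∃ a : ℝ, a ≠ 0 ∧ ∃ φ₀ : ℝ,
      (∀ φ : ℝ, p φ = a * Real.cos (3 * (φ - φ₀))) ∧
      (Set.range fun φ : ℝ =>
        ((p φ * Real.cos φ - deriv p φ * Real.sin φ,
          p φ * Real.sin φ + deriv p φ * Real.cos φ) : ℝ × ℝ)) =
      (Set.range fun t : ℝ =>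
        (((-2 * a * Real.cos t - a * Real.cos (2 * t)) * Real.cos φ₀ -
            (-2 * a * Real.sin t + a * Real.sin (2 * t)) * Real.sin φ₀,
          (-2 * a * Real.cos t - a * Real.cos (2 * t)) * Real.sin φ₀ +
            (-2 * a * Real.sin t + a * Real.sin (2 * t)) * Real.cos φ₀) :
          ℝ × ℝ)) := by
  set z : ℂ := ⟨a₃, b₃⟩ with hz
  have hz0 : z ≠ 0 := by
    intro h
    apply hne
    have h1 : a₃ = 0 := by simpa using congrArg Complex.re h
    have h2 : b₃ = 0 := by simpa using congrArg Complex.im h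
    simp [h1, h2]
  set a : ℝ := ‖z‖ with ha
  have ha0 : a ≠ 0 := by simpa [ha] using (norm_ne_zero_iff.mpr hz0)
  set φ₀ : ℝ := Complex.arg z / 3 with hφ₀
  have h3φ₀ : 3 * φ₀ = Complex.arg z := by rw [hφ₀]; ring
  have hca : a₃ = a * Real.cos (3 * φ₀) := by
    rw [h3φ₀, Complex.cos_arg hz0, ha]
    field_simp [hz]
    rfl
  have hsa : b₃ = a * Real.sin (3 * φ₀) := by
    rw [h3φ₀, Complex.sin_arg, ha]
    field_simp [hz]
    rfl
  have hp' : ∀ φ, p φ = a * Real.cos (3 * (φ - φ₀)) := by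
    intro φ
    rw [hp, hca, hsa]
    have : (3 : ℝ) * (φ - φ₀) = 3 * φ - 3 * φ₀ := by ring
    rw [this, Real.cos_sub]
    ring
  refine ⟨a, ha0, φ₀, hp', ?_⟩
  have hpfun : p = fun φ => a * Real.cos (3 * (φ - φ₀)) := funext hp'
  have hderiv : ∀ φ, deriv p φ = -(3 * (a * Real.sin (3 * (φ - φ₀)))) := by
    intro φ
    rw [hpfun]
    have h1 : HasDerivAt (fun φ : ℝ => 3 * (φ - φ₀)) 3 φ := by
      simpa using (((hasDerivAt_id φ).sub_const φ₀).const_mul 3)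
    have h2 : HasDerivAt (fun φ : ℝ => a * Real.cos (3 * (φ - φ₀)))
        (a * (-Real.sin (3 * (φ - φ₀)) * 3)) φ :=
      by have := ((Real.hasDerivAt_cos (3 * (φ - φ₀))).comp φ h1).const_mul a; exact this
    rw [h2.deriv]
    ring
  ext x
  simp only [Set.mem_range]
  constructor
  · rintro ⟨φ, rfl⟩
    refine ⟨π - 2 * (φ - φ₀), ?_⟩
    rw [hp' φ, hderiv φ]
    have hφ : φ = (φ - φ₀) + φ₀ := by ring
    rw [show Real.cos φ = Real.cos ((φ - φ₀) + φ₀) by rw [← hφ],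
        show Real.sin φ = Real.sin ((φ - φ₀) + φ₀) by rw [← hφ]]
    exact (hypo_key a φ₀ (φ - φ₀)).symm
  · rintro ⟨t, rfl⟩
    refine ⟨(π - t) / 2 + φ₀, ?_⟩
    rw [hp', hderiv]
    have hs : ((π - t) / 2 + φ₀) - φ₀ = (π - t) / 2 := by ring
    rw [hs]
    have ht : t = π - 2 * ((π - t) / 2) := by ring
    rw [show Real.cos t = Real.cos (π - 2 * ((π - t) / 2)) by rw [← ht],
        show Real.sin t = Real.sin (π - 2 * ((π - t) / 2)) by rw [← ht],
        show Real.cos (2 * t) = Real.cos (2 * (π - 2 * ((π - t) / 2))) by rw [← ht],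
        show Real.sin (2 * t) = Real.sin (2 * (π - 2 * ((π - t) / 2))) by rw [← ht]]
    exact hypo_key a φ₀ ((π - t) / 2)
end

section
/- Let p(φ) = a₀ + a₂cos(2φ) + b₂sin(2φ) be the support function of a closed convex curve C (so p + p'' > 0 everywhere) of length L = ∫₀^{2π} p dφ. Let e(φ) = (−p'(φ)sin φ − p''(φ)cos φ, p'(φ)cos φ − p''(φ)sin φ) be the evolute of C, and let c(φ) = (q(φ)cos φ − q'(φ)sin φ, q(φ)sin φ + q'(φ)cos φ) with q = p − L/(2π) be the interior parallel curve to C at distance L/(2π). Then the evolute and the parallel curve are similar with ratio 2: there exists an angle θ such that the image of e equals the image of c under the rotation by θ about the origin followed by the homothety of ratio 2 centered at the origin. -/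
open Real

/-- Proposition 5.1: for a closed convex curve with support function
`p(φ) = a₀ + a₂ cos 2φ + b₂ sin 2φ`, the evolute and the interior parallel
curve at distance `L/(2π)` are similar with ratio `2`. -/
theorem evolute_similar_parallel_curve_ratio_two
    (a₀ a₂ b₂ : ℝ) (p q : ℝ → ℝ) (L : ℝ) (e c : ℝ → ℝ × ℝ)
    (hp : ∀ φ, p φ = a₀ + a₂ * Real.cos (2 * φ) + b₂ * Real.sin (2 * φ))
    (hconv : ∀ φ, p φ + deriv (deriv p) φ > 0)
    (hL : L = ∫ φ in (0:ℝ)..(2 * π), p φ)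
    (he : ∀ φ, e φ =
      (-(deriv p φ) * Real.sin φ - deriv (deriv p) φ * Real.cos φ,
        deriv p φ * Real.cos φ - deriv (deriv p) φ * Real.sin φ))
    (hq : ∀ φ, q φ = p φ - L / (2 * π))
    (hc : ∀ φ, c φ =
      (q φ * Real.cos φ - deriv q φ * Real.sin φ,
        q φ * Real.sin φ + deriv q φ * Real.cos φ)) :
    ∃ θ : ℝ,
      Set.range e =
        Set.range fun φ : ℝ =>
          ((2 * ((c φ).1 * Real.cos θ - (c φ).2 * Real.sin θ),
            2 * ((c φ).1 * Real.sin θ + (c φ).2 * Real.cos θ)) : ℝ × ℝ) := by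
  have hpf : p = fun φ => a₀ + a₂ * Real.cos (2 * φ) + b₂ * Real.sin (2 * φ) := funext hp
  have h2x : ∀ φ : ℝ, HasDerivAt (fun x : ℝ => 2 * x) 2 φ := by
    intro φ; simpa using (hasDerivAt_id φ).const_mul 2
  have hcos : ∀ φ : ℝ, HasDerivAt (fun x => Real.cos (2 * x)) (-Real.sin (2 * φ) * 2) φ :=
    fun φ => (Real.hasDerivAt_cos (2 * φ)).comp φ (h2x φ)
  have hsin : ∀ φ : ℝ, HasDerivAt (fun x => Real.sin (2 * x)) (Real.cos (2 * φ) * 2) φ :=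
    fun φ => (Real.hasDerivAt_sin (2 * φ)).comp φ (h2x φ)
  have hd1 : ∀ φ, HasDerivAt p (-2 * a₂ * Real.sin (2 * φ) + 2 * b₂ * Real.cos (2 * φ)) φ := by
    intro φ
    rw [hpf]
    have := ((hasDerivAt_const φ a₀).add ((hcos φ).const_mul a₂)).add ((hsin φ).const_mul b₂)
    refine this.congr_deriv ?_
    ring
  have hp' : ∀ φ, deriv p φ = -2 * a₂ * Real.sin (2 * φ) + 2 * b₂ * Real.cos (2 * φ) :=
    fun φ => (hd1 φ).deriv
  have hp'f : deriv p = fun φ => -2 * a₂ * Real.sin (2 * φ) + 2 * b₂ * Real.cos (2 * φ) :=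
    funext hp'
  have hp'' : ∀ φ, deriv (deriv p) φ = -4 * a₂ * Real.cos (2 * φ) - 4 * b₂ * Real.sin (2 * φ) := by
    intro φ
    rw [hp'f]
    have h : HasDerivAt (fun x => -2 * a₂ * Real.sin (2 * x) + 2 * b₂ * Real.cos (2 * x))
        (-4 * a₂ * Real.cos (2 * φ) - 4 * b₂ * Real.sin (2 * φ)) φ := by
      have := ((hsin φ).const_mul (-2 * a₂)).add ((hcos φ).const_mul (2 * b₂))
      refine this.congr_deriv ?_
      ring
    exact h.deriv
  -- length
  have hLval : L = 2 * π * a₀ := by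
    have hP : ∀ φ : ℝ, HasDerivAt
        (fun x => a₀ * x + a₂ * Real.sin (2 * x) / 2 - b₂ * Real.cos (2 * x) / 2) (p φ) φ := by
      intro φ
      have := (((hasDerivAt_id φ).const_mul a₀).add (((hsin φ).const_mul a₂).div_const 2)).sub
        (((hcos φ).const_mul b₂).div_const 2)
      rw [hp]
      refine this.congr_deriv ?_
      ring
    have hcont : IntervalIntegrable p MeasureTheory.volume 0 (2 * π) := by
      rw [hpf]
      apply Continuous.intervalIntegrable
      fun_prop
    have := intervalIntegral.integral_eq_sub_of_hasDerivAt (fun φ _ => hP φ) hcont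
    rw [hL, this]
    have hs : Real.sin (2 * (2 * π)) = 0 := by
      have := Real.sin_int_mul_pi 4
      push_cast at this
      rw [show (2 : ℝ) * (2 * π) = 4 * π by ring, this]
    have hc4 : Real.cos (2 * (2 * π)) = 1 := by
      have := Real.cos_int_mul_two_pi 2
      push_cast at this
      exact this
    rw [hs, hc4]
    simp
    ring
  have hqv : ∀ φ, q φ = a₂ * Real.cos (2 * φ) + b₂ * Real.sin (2 * φ) := by
    intro φ
    rw [hq, hp, hLval]
    have hπ : (2 : ℝ) * π ≠ 0 := by positivity
    field_simp
    ring
  have hqd : ∀ φ, deriv q φ = -2 * a₂ * Real.sin (2 * φ) + 2 * b₂ * Real.cos (2 * φ) := by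
    intro φ
    have hqf : q = fun φ => p φ - L / (2 * π) := funext hq
    rw [hqf, deriv_sub_const, hp']
  refine ⟨π / 4, ?_⟩
  have h2 : Real.sqrt 2 ^ 2 = 2 := Real.sq_sqrt (by norm_num)
  have key : ∀ φ, e φ =
      (2 * ((c (φ + π / 4)).1 * Real.cos (π / 4) - (c (φ + π / 4)).2 * Real.sin (π / 4)),
       2 * ((c (φ + π / 4)).1 * Real.sin (π / 4) + (c (φ + π / 4)).2 * Real.cos (π / 4))) := by
    intro φ
    rw [he, hc, hqv, hqd, hp', hp'',
      show (2 : ℝ) * (φ + π / 4) = 2 * φ + π / 2 by ring,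
      Real.cos_add_pi_div_two, Real.sin_add_pi_div_two,
      Real.cos_add, Real.sin_add, Real.cos_pi_div_four, Real.sin_pi_div_four,
      Real.sin_two_mul, Real.cos_two_mul]
    refine Prod.ext ?_ ?_
    · show _ = _
      simp only []
      linear_combination (-b₂ * Real.sin φ - 2 * b₂ * Real.sin φ * Real.cos φ ^ 2
        + 2 * a₂ * Real.cos φ - 4 * a₂ * Real.cos φ ^ 3
        - 2 * a₂ * Real.sin φ ^ 2 * Real.cos φ) * h2
    · show _ = _
      simp only []
      linear_combination (b₂ * Real.cos φ - 2 * b₂ * Real.cos φ ^ 3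
        - 4 * b₂ * Real.sin φ ^ 2 * Real.cos φ + 2 * a₂ * Real.sin φ
        - 2 * a₂ * Real.sin φ * Real.cos φ ^ 2) * h2
  ext y
  simp only [Set.mem_range]
  constructor
  · rintro ⟨φ, rfl⟩
    exact ⟨φ + π / 4, (key φ).symm⟩
  · rintro ⟨φ, rfl⟩
    refine ⟨φ - π / 4, ?_⟩
    rw [key (φ - π / 4)]
    norm_num
end

section
/- Let p(φ) = a₀ + a₃cos(3φ) + b₃sin(3φ) be the support function of a closed convex curve C (so p + p'' > 0 everywhere) of length L = ∫₀^{2π} p dφ. Let e(φ) = (−p'(φ)sin φ − p''(φ)cos φ, p'(φ)cos φ − p''(φ)sin φ) be the evolute of C, and let c(φ) = (q(φ)cos φ − q'(φ)sin φ, q(φ)sin φ + q'(φ)cos φ) with q = p − L/(2π) be the interior parallel curve to C at distance L/(2π). Then the evolute and the parallel curve are similar with ratio 3: there exists an angle θ such that the image of e equals the image of c under the rotation by θ about the origin followed by the homothety of ratio 3 centered at the origin. -/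
open Real

/-- Proposition 5.3: for a closed convex curve with support function
`p(φ) = a₀ + a₃ cos 3φ + b₃ sin 3φ`, the evolute and the interior parallel
curve at distance `L/(2π)` are similar with ratio `3`. -/
theorem evolute_similar_parallel_curve_ratio_three
    (a₀ a₃ b₃ : ℝ) (p q : ℝ → ℝ) (L : ℝ) (e c : ℝ → ℝ × ℝ)
    (hp : ∀ φ, p φ = a₀ + a₃ * Real.cos (3 * φ) + b₃ * Real.sin (3 * φ))
    (hconv : ∀ φ, p φ + deriv (deriv p) φ > 0)
    (hL : L = ∫ φ in (0:ℝ)..(2 * π), p φ)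
    (he : ∀ φ, e φ =
      (-(deriv p φ) * Real.sin φ - deriv (deriv p) φ * Real.cos φ,
        deriv p φ * Real.cos φ - deriv (deriv p) φ * Real.sin φ))
    (hq : ∀ φ, q φ = p φ - L / (2 * π))
    (hc : ∀ φ, c φ =
      (q φ * Real.cos φ - deriv q φ * Real.sin φ,
        q φ * Real.sin φ + deriv q φ * Real.cos φ)) :
    ∃ θ : ℝ,
      Set.range e =
        Set.range fun φ : ℝ =>
          ((3 * ((c φ).1 * Real.cos θ - (c φ).2 * Real.sin θ),
            3 * ((c φ).1 * Real.sin θ + (c φ).2 * Real.cos θ)) : ℝ × ℝ) := by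
  have hpfun : p = fun φ => a₀ + a₃ * Real.cos (3 * φ) + b₃ * Real.sin (3 * φ) := funext hp
  have h3 : ∀ φ : ℝ, HasDerivAt (fun x : ℝ => 3 * x) 3 φ := by
    intro φ
    simpa using (hasDerivAt_id φ).const_mul (3:ℝ)
  have hcos3 : ∀ φ : ℝ, HasDerivAt (fun x => Real.cos (3 * x)) (-3 * Real.sin (3 * φ)) φ := by
    intro φ
    have := (Real.hasDerivAt_cos (3 * φ)).comp φ (h3 φ)
    exact this.congr_deriv (by ring)
  have hsin3 : ∀ φ : ℝ, HasDerivAt (fun x => Real.sin (3 * x)) (3 * Real.cos (3 * φ)) φ := by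
    intro φ
    have := (Real.hasDerivAt_sin (3 * φ)).comp φ (h3 φ)
    exact this.congr_deriv (by ring)
  have hpd : ∀ φ : ℝ, HasDerivAt p (a₃ * (-3 * Real.sin (3 * φ)) + b₃ * (3 * Real.cos (3 * φ))) φ := by
    intro φ
    rw [hpfun]
    have h := ((hasDerivAt_const φ a₀).add ((hcos3 φ).const_mul a₃)).add ((hsin3 φ).const_mul b₃)
    exact h.congr_deriv (by ring)
  have hp1 : ∀ φ, deriv p φ = a₃ * (-3 * Real.sin (3 * φ)) + b₃ * (3 * Real.cos (3 * φ)) :=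
    fun φ => (hpd φ).deriv
  have hp1fun : deriv p = fun φ => a₃ * (-3 * Real.sin (3 * φ)) + b₃ * (3 * Real.cos (3 * φ)) :=
    funext hp1
  have hp2 : ∀ φ, deriv (deriv p) φ = a₃ * (-9 * Real.cos (3 * φ)) + b₃ * (-9 * Real.sin (3 * φ)) := by
    intro φ
    rw [hp1fun]
    have h : HasDerivAt (fun φ => a₃ * (-3 * Real.sin (3 * φ)) + b₃ * (3 * Real.cos (3 * φ)))
        (a₃ * (-3 * (3 * Real.cos (3 * φ))) + b₃ * (3 * (-3 * Real.sin (3 * φ)))) φ :=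
      (((hsin3 φ).const_mul (-3:ℝ)).const_mul a₃).add
        (((hcos3 φ).const_mul (3:ℝ)).const_mul b₃)
    rw [h.deriv]; ring
  -- L = 2 π a₀
  have hL2 : L = 2 * π * a₀ := by
    have hF : ∀ x ∈ Set.uIcc (0:ℝ) (2*π), HasDerivAt
        (fun x => a₀ * x + a₃ * (Real.sin (3*x) / 3) - b₃ * (Real.cos (3*x) / 3)) (p x) x := by
      intro x _
      have h : HasDerivAt (fun x => a₀ * x + a₃ * (Real.sin (3*x) / 3) - b₃ * (Real.cos (3*x) / 3))
          (a₀ * 1 + a₃ * (3 * Real.cos (3*x) / 3) - b₃ * (-3 * Real.sin (3*x) / 3)) x :=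
        (((hasDerivAt_id x).const_mul a₀).add (((hsin3 x).div_const 3).const_mul a₃)).sub
          (((hcos3 x).div_const 3).const_mul b₃)
      convert h using 1
      rw [hp]; ring
    have hint : IntervalIntegrable p MeasureTheory.volume 0 (2*π) := by
      rw [hpfun]
      have hcont : Continuous fun φ : ℝ => a₀ + a₃ * Real.cos (3 * φ) + b₃ * Real.sin (3 * φ) :=
        (continuous_const.add (continuous_const.mul (Real.continuous_cos.comp (continuous_const.mul continuous_id)))).add
          (continuous_const.mul (Real.continuous_sin.comp (continuous_const.mul continuous_id)))
      exact hcont.intervalIntegrable _ _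
    have hs : Real.sin (3 * (2*π)) = 0 := by
      have h1 : (3:ℝ) * (2*π) = (6:ℕ) * π := by push_cast; ring
      rw [h1, Real.sin_nat_mul_pi]
    have hco : Real.cos (3 * (2*π)) = 1 := by
      have h1 : (3:ℝ) * (2*π) = (3:ℕ) * (2*π) := by push_cast; ring
      rw [h1, Real.cos_nat_mul_two_pi]
    rw [hL, intervalIntegral.integral_eq_sub_of_hasDerivAt hF hint]
    simp [hs, hco]
    ring
  have hqv : ∀ φ, q φ = a₃ * Real.cos (3 * φ) + b₃ * Real.sin (3 * φ) := by
    intro φ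
    rw [hq, hp, hL2]
    have hπ : (2:ℝ) * π ≠ 0 := by positivity
    field_simp
    ring
  have hq1 : ∀ φ, deriv q φ = a₃ * (-3 * Real.sin (3 * φ)) + b₃ * (3 * Real.cos (3 * φ)) := by
    intro φ
    have : q = fun φ => p φ - L / (2 * π) := funext hq
    rw [this, deriv_sub_const, hp1]
  -- key pointwise identity
  refine ⟨π, ?_⟩
  have key : ∀ φ : ℝ, e φ =
      (3 * ((c (φ + π/2)).1 * Real.cos π - (c (φ + π/2)).2 * Real.sin π),
       3 * ((c (φ + π/2)).1 * Real.sin π + (c (φ + π/2)).2 * Real.cos π)) := by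
    intro φ
    have h3φ : 3 * (φ + π/2) = 3*φ + (π + π/2) := by ring
    have hc1 : Real.cos (π + π/2) = 0 := by rw [Real.cos_add]; simp
    have hs1 : Real.sin (π + π/2) = -1 := by rw [Real.sin_add]; simp
    rw [he, hc, hqv, hq1]
    simp only [h3φ, Real.cos_add, Real.sin_add, hc1, hs1, Real.cos_pi, Real.sin_pi,
      Real.cos_pi_div_two, Real.sin_pi_div_two, hp1, hp2]
    rw [Prod.mk.injEq]
    constructor <;> ring
  ext y
  simp only [Set.mem_range]
  constructor
  · rintro ⟨φ, rfl⟩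
    exact ⟨φ + π/2, (key φ).symm⟩
  · rintro ⟨φ, rfl⟩
    refine ⟨φ - π/2, ?_⟩
    have h := key (φ - π/2)
    rw [sub_add_cancel] at h
    exact h
end

section
/- Let p : ℝ → ℝ be a 2π-periodic function of class C². Set L = ∫₀^{2π} p dφ, F = ½∫₀^{2π}(p² − p'²) dφ, Δ = L² − 4πF, and F_e = ½∫₀^{2π} p'² dφ − ½∫₀^{2π} p''² dφ. Then 0 ≤ Δ ≤ π|F_e| (Hurwitz's inequality). -/
open Real MeasureTheory Complex intervalIntegral AddCircle
open scoped ENNReal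

namespace HurwitzAux

instance fact_two_pi_pos : Fact ((0:ℝ) < 2 * π) := ⟨by positivity⟩

/-- Fourier coefficient of a `2π`-periodic function. -/
noncomputable def cc (g : ℝ → ℂ) (hper : Function.Periodic g (2 * π)) (n : ℤ) : ℂ :=
  fourierCoeff hper.lift n

lemma cc_eq (g : ℝ → ℂ) (hper : Function.Periodic g (2 * π)) (n : ℤ) :
    cc g hper n =
      (1 / (2 * π) : ℝ) • ∫ x in (0:ℝ)..(2 * π),
        fourier (-n) (x : AddCircle (2 * π)) • g x := by
  rw [cc, fourierCoeff_eq_intervalIntegral _ n 0]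
  simp only [zero_add, Function.Periodic.lift_coe]

lemma parseval (g : ℝ → ℂ) (hg : Continuous g) (hper : Function.Periodic g (2 * π)) :
    HasSum (fun n : ℤ => ‖cc g hper n‖ ^ 2)
      ((1 / (2 * π)) * ∫ x in (0:ℝ)..(2 * π), ‖g x‖ ^ 2) := by
  have hlift : Continuous hper.lift := hg.quotient_liftOn' _
  set F : C(AddCircle (2 * π), ℂ) := ⟨hper.lift, hlift⟩ with hFdef
  set fL : Lp ℂ 2 (@haarAddCircle (2 * π) _) := ContinuousMap.toLp 2 haarAddCircle ℂ F with hfL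
  have hae : ⇑fL =ᵐ[haarAddCircle] ⇑F := ContinuousMap.coeFn_toLp (𝕜 := ℂ) haarAddCircle F
  have hcoeff : ∀ n : ℤ, fourierCoeff (⇑fL) n = cc g hper n := by
    intro n
    unfold fourierCoeff cc
    exact integral_congr_ae (hae.mono fun t ht => by simp only [ht]; rfl)
  have hsummable : Summable fun n : ℤ => ‖cc g hper n‖ ^ 2 := by
    have h2 := (lp.memℓp (fourierBasis.repr fL)).summable (p := 2) (by norm_num)
    have h3 : ∀ n : ℤ, ‖fourierBasis.repr fL n‖ ^ (2 : ℝ≥0∞).toReal = ‖cc g hper n‖ ^ 2 := by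
      intro n
      rw [fourierBasis_repr, hcoeff n]
      norm_num [Real.rpow_natCast]
    simpa only [h3] using h2
  have hval := tsum_sq_fourierCoeff fL
  have hint : (∫ t, ‖fL t‖ ^ 2 ∂haarAddCircle)
      = (1 / (2 * π)) * ∫ x in (0:ℝ)..(2 * π), ‖g x‖ ^ 2 := by
    have h1 : (∫ t, ‖fL t‖ ^ 2 ∂haarAddCircle)
        = ∫ t : AddCircle (2 * π), ‖F t‖ ^ 2 ∂haarAddCircle :=
      integral_congr_ae (hae.mono fun t ht => by simp only [ht])
    have h2 : (∫ x in (0:ℝ)..(0 + 2 * π), ‖F (x : AddCircle (2 * π))‖ ^ 2)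
        = ∫ t : AddCircle (2 * π), ‖F t‖ ^ 2 ∂volume :=
      AddCircle.intervalIntegral_preimage (2 * π) 0 (fun z => ‖F z‖ ^ 2)
    rw [AddCircle.volume_eq_smul_haarAddCircle, MeasureTheory.integral_smul_measure,
      ENNReal.toReal_ofReal (by positivity : (0:ℝ) ≤ 2 * π)] at h2
    have hFg : ∀ x : ℝ, F (x : AddCircle (2 * π)) = g x := fun x => rfl
    rw [h1]
    have h4 : (∫ x in (0:ℝ)..(0 + 2 * π), ‖F (x : AddCircle (2 * π))‖ ^ 2)
        = ∫ x in (0:ℝ)..(2 * π), ‖g x‖ ^ 2 := by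
      rw [zero_add]
      exact intervalIntegral.integral_congr fun x _ => by rw [hFg]
    have hpi : (2 * π) ≠ 0 := by positivity
    rw [h4, smul_eq_mul] at h2
    rw [h2]
    field_simp
  have htsum : (∑' n : ℤ, ‖cc g hper n‖ ^ 2)
      = (1 / (2 * π)) * ∫ x in (0:ℝ)..(2 * π), ‖g x‖ ^ 2 := by
    rw [← hint, ← hval]
    exact tsum_congr fun n => by rw [hcoeff n]
  exact htsum ▸ hsummable.hasSum

lemma cc_deriv (g g' : ℝ → ℂ) (hper : Function.Periodic g (2 * π))
    (hper' : Function.Periodic g' (2 * π))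
    (hd : ∀ x, HasDerivAt g (g' x) x) (hc : Continuous g) (hc' : Continuous g') (n : ℤ) :
    cc g' hper' n = (I * n) * cc g hper n := by
  have hfc : Continuous fun x : ℝ => fourier (-n) (x : AddCircle (2 * π)) :=
    (fourier (-n)).continuous.comp (AddCircle.continuous_mk' _)
  have key : (∫ x in (0:ℝ)..(2 * π), fourier (-n) (x : AddCircle (2 * π)) • g' x)
      = (I * n) * ∫ x in (0:ℝ)..(2 * π), fourier (-n) (x : AddCircle (2 * π)) • g x := by
    have hderiv : ∀ x ∈ Set.uIcc (0:ℝ) (2 * π),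
        HasDerivAt (fun y : ℝ => fourier (-n) (y : AddCircle (2 * π)) * g y)
          ((2 * ↑π * I * (-n : ℤ) / ((2 * π : ℝ) : ℂ)) * fourier (-n) (x : AddCircle (2 * π)) * g x
            + fourier (-n) (x : AddCircle (2 * π)) * g' x) x :=
      fun x _ => (hasDerivAt_fourier (2 * π) (-n) x).mul (hd x)
    have hint : IntervalIntegrable (fun x : ℝ =>
        (2 * ↑π * I * (-n : ℤ) / ((2 * π : ℝ) : ℂ)) * fourier (-n) (x : AddCircle (2 * π)) * g x
          + fourier (-n) (x : AddCircle (2 * π)) * g' x) volume 0 (2 * π) :=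
      (((continuous_const.mul hfc).mul hc).add (hfc.mul hc')).intervalIntegrable _ _
    have hftc := intervalIntegral.integral_eq_sub_of_hasDerivAt hderiv hint
    have hbdry : fourier (-n) (((2 * π : ℝ)) : AddCircle (2 * π)) * g (2 * π)
        = fourier (-n) ((0:ℝ) : AddCircle (2 * π)) * g 0 := by
      have h1 : (((2 * π : ℝ)) : AddCircle (2 * π)) = ((0:ℝ) : AddCircle (2 * π)) := by
        rw [AddCircle.coe_period]
        norm_cast
      have h2 : g (2 * π) = g 0 := by simpa using hper 0
      rw [h2]
      exact congrArg (fun z => fourier (-n) z * g 0) h1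
    rw [hbdry, sub_self] at hftc
    have hi1 : IntervalIntegrable (fun x : ℝ =>
        (2 * ↑π * I * (-n : ℤ) / ((2 * π : ℝ) : ℂ)) * fourier (-n) (x : AddCircle (2 * π)) * g x)
        volume 0 (2 * π) := ((continuous_const.mul hfc).mul hc).intervalIntegrable _ _
    have hi2 : IntervalIntegrable (fun x : ℝ =>
        fourier (-n) (x : AddCircle (2 * π)) * g' x) volume 0 (2 * π) :=
      (hfc.mul hc').intervalIntegrable _ _
    rw [intervalIntegral.integral_add hi1 hi2] at hftc
    have hconst : (∫ x in (0:ℝ)..(2 * π),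
        (2 * ↑π * I * (-n : ℤ) / ((2 * π : ℝ) : ℂ)) * fourier (-n) (x : AddCircle (2 * π)) * g x)
        = (2 * ↑π * I * (-n : ℤ) / ((2 * π : ℝ) : ℂ)) *
          ∫ x in (0:ℝ)..(2 * π), fourier (-n) (x : AddCircle (2 * π)) * g x := by
      rw [← intervalIntegral.integral_const_mul]
      exact intervalIntegral.integral_congr fun x _ => by ring
    rw [hconst] at hftc
    have hcoef : (2 * ↑π * I * (-n : ℤ) / ((2 * π : ℝ) : ℂ)) = -(I * n) := by
      have h2π : ((2 * π : ℝ) : ℂ) ≠ 0 := by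
        simp only [ne_eq, Complex.ofReal_eq_zero]
        positivity
      rw [div_eq_iff h2π]
      push_cast
      ring
    rw [hcoef] at hftc
    simp only [smul_eq_mul]
    linear_combination hftc
  rw [cc_eq, cc_eq, key]
  rw [Complex.real_smul, Complex.real_smul]
  ring

lemma periodic_deriv' (f : ℝ → ℝ) (c : ℝ) (h : Function.Periodic f c) :
    Function.Periodic (deriv f) c := by
  intro x
  have e1 : (fun y => f (y + c)) = f := funext h
  calc deriv f (x + c) = deriv (fun y => f (y + c)) x := (deriv_comp_add_const f c x).symm
    _ = deriv f x := by rw [e1]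

end HurwitzAux




open Real

set_option maxHeartbeats 2000000 in
open HurwitzAux in
/-- Hurwitz's inequality: `0 ≤ Δ ≤ π|F_e|`, where `F_e` is the algebraic
area enclosed by the evolute. -/
theorem hurwitz_inequality
    (p : ℝ → ℝ)
    (hper : Function.Periodic p (2 * π))
    (hC2 : ContDiff ℝ 2 p)
    (L F Δ Fe : ℝ)
    (hL : L = ∫ φ in (0:ℝ)..(2 * π), p φ)
    (hF : F = (1 / 2) * ∫ φ in (0:ℝ)..(2 * π), (p φ ^ 2 - (deriv p φ) ^ 2))
    (hΔ : Δ = L ^ 2 - 4 * π * F)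
    (hFe : Fe = (1 / 2) * (∫ φ in (0:ℝ)..(2 * π), (deriv p φ) ^ 2) -
            (1 / 2) * ∫ φ in (0:ℝ)..(2 * π), (deriv (deriv p) φ) ^ 2) :
    0 ≤ Δ ∧ Δ ≤ π * |Fe| := by
  -- regularity facts
  have hC11 : ContDiff ℝ (1 + 1) p := by
    have h : ((1 : WithTop ℕ∞) + 1) = 2 := by norm_num
    rwa [h]
  obtain ⟨hdiffp, -, hC1d⟩ := contDiff_succ_iff_deriv.mp hC11
  obtain ⟨hdiffdp, hcont2⟩ := contDiff_one_iff_deriv.mp hC1d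
  have hcont0 : Continuous p := hC2.continuous
  have hcont1 : Continuous (deriv p) := hC1d.continuous
  -- periodicity of derivatives
  have hperd : Function.Periodic (deriv p) (2 * π) := periodic_deriv' p _ hper
  have hperdd : Function.Periodic (deriv (deriv p)) (2 * π) := periodic_deriv' (deriv p) _ hperd
  -- complexifications
  have hPer : Function.Periodic (fun x : ℝ => ((p x : ℂ))) (2 * π) := fun x => by
    simp [hper x]
  have hPerQ : Function.Periodic (fun x : ℝ => ((deriv p x : ℝ) : ℂ)) (2 * π) := fun x => by
    simp [hperd x]
  have hPerR : Function.Periodic (fun x : ℝ => ((deriv (deriv p) x : ℝ) : ℂ)) (2 * π) := fun x => by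
    simp [hperdd x]
  have hcP : Continuous fun x : ℝ => ((p x : ℂ)) := Complex.continuous_ofReal.comp hcont0
  have hcQ : Continuous fun x : ℝ => ((deriv p x : ℝ) : ℂ) := Complex.continuous_ofReal.comp hcont1
  have hcR : Continuous fun x : ℝ => ((deriv (deriv p) x : ℝ) : ℂ) :=
    Complex.continuous_ofReal.comp hcont2
  have hdP : ∀ x : ℝ, HasDerivAt (fun y : ℝ => ((p y : ℂ))) ((deriv p x : ℝ) : ℂ) x := fun x =>
    ((hdiffp x).hasDerivAt).ofReal_comp
  have hdQ : ∀ x : ℝ, HasDerivAt (fun y : ℝ => ((deriv p y : ℝ) : ℂ)) ((deriv (deriv p) x : ℝ) : ℂ) x :=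
    fun x => ((hdiffdp x).hasDerivAt).ofReal_comp
  -- coefficients
  set c1 : ℤ → ℂ := cc (fun x : ℝ => ((p x : ℂ))) hPer with hc1def
  set c2 : ℤ → ℂ := cc (fun x : ℝ => ((deriv p x : ℝ) : ℂ)) hPerQ with hc2def
  set c3 : ℤ → ℂ := cc (fun x : ℝ => ((deriv (deriv p) x : ℝ) : ℂ)) hPerR with hc3def
  have hrel1 : ∀ n : ℤ, c2 n = (Complex.I * n) * c1 n := fun n =>
    cc_deriv _ _ hPer hPerQ hdP hcP hcQ n
  have hrel2 : ∀ n : ℤ, c3 n = (Complex.I * n) * c2 n := fun n =>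
    cc_deriv _ _ hPerQ hPerR hdQ hcQ hcR n
  -- norm-square relations
  have hbd : ∀ n : ℤ, ‖c2 n‖ ^ 2 = (n : ℝ) ^ 2 * ‖c1 n‖ ^ 2 := by
    intro n
    rw [hrel1 n]
    rw [norm_mul, norm_mul, mul_pow, mul_pow, Complex.norm_I, one_pow, one_mul]
    congr 1
    rw [Complex.norm_intCast]
    push_cast
    exact sq_abs _
  have hbe : ∀ n : ℤ, ‖c3 n‖ ^ 2 = (n : ℝ) ^ 2 * ‖c2 n‖ ^ 2 := by
    intro n
    rw [hrel2 n]
    rw [norm_mul, norm_mul, mul_pow, mul_pow, Complex.norm_I, one_pow, one_mul]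
    congr 1
    rw [Complex.norm_intCast]
    push_cast
    exact sq_abs _
  have hc20 : c2 0 = 0 := by rw [hrel1 0]; simp
  have hc30 : c3 0 = 0 := by rw [hrel2 0]; simp
  -- value of c1 0
  have hc10 : c1 0 = ((1 / (2 * π) * L : ℝ) : ℂ) := by
    rw [hc1def, cc_eq]
    simp only [neg_zero, fourier_zero, one_smul]
    rw [intervalIntegral.integral_ofReal, Complex.real_smul, ← Complex.ofReal_mul, hL]
  have hd0 : ‖c1 0‖ ^ 2 = (1 / (2 * π) * L) ^ 2 := by
    rw [hc10, Complex.norm_real]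
    exact sq_abs _
  -- Parseval
  have hnormsq : ∀ f : ℝ → ℝ,
      (∫ x in (0:ℝ)..(2 * π), ‖((f x : ℂ))‖ ^ 2) = ∫ x in (0:ℝ)..(2 * π), f x ^ 2 :=
    fun f => intervalIntegral.integral_congr fun x _ => by
      rw [Complex.norm_real]; exact sq_abs _
  have hAsum : HasSum (fun n : ℤ => ‖c1 n‖ ^ 2)
      ((1 / (2 * π)) * ∫ x in (0:ℝ)..(2 * π), p x ^ 2) := by
    have h := parseval _ hcP hPer
    rwa [hnormsq p] at h
  have hBsum : HasSum (fun n : ℤ => ‖c2 n‖ ^ 2)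
      ((1 / (2 * π)) * ∫ x in (0:ℝ)..(2 * π), deriv p x ^ 2) := by
    have h := parseval _ hcQ hPerQ
    rwa [hnormsq (deriv p)] at h
  have hCsum : HasSum (fun n : ℤ => ‖c3 n‖ ^ 2)
      ((1 / (2 * π)) * ∫ x in (0:ℝ)..(2 * π), deriv (deriv p) x ^ 2) := by
    have h := parseval _ hcR hPerR
    rwa [hnormsq (deriv (deriv p))] at h
  clear_value c1 c2 c3
  set IA : ℝ := ∫ x in (0:ℝ)..(2 * π), p x ^ 2 with hIAdef
  set IB : ℝ := ∫ x in (0:ℝ)..(2 * π), deriv p x ^ 2 with hIBdef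
  set IC : ℝ := ∫ x in (0:ℝ)..(2 * π), deriv (deriv p) x ^ 2 with hICdef
  -- split F
  have hiA : IntervalIntegrable (fun x => p x ^ 2) MeasureTheory.volume 0 (2 * π) :=
    (hcont0.pow 2).intervalIntegrable _ _
  have hiB : IntervalIntegrable (fun x => deriv p x ^ 2) MeasureTheory.volume 0 (2 * π) :=
    (hcont1.pow 2).intervalIntegrable _ _
  have hFsplit : F = 1 / 2 * IA - 1 / 2 * IB := by
    rw [hF, intervalIntegral.integral_sub hiA hiB]; ring
  -- the three sums
  have hAB : HasSum (fun n : ℤ => ‖c2 n‖ ^ 2 - ‖c1 n‖ ^ 2)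
      ((1 / (2 * π)) * IB - (1 / (2 * π)) * IA) := hBsum.sub hAsum
  have h0 : HasSum (fun n : ℤ => if n = 0 then ‖c1 0‖ ^ 2 else 0) (‖c1 0‖ ^ 2) :=
    hasSum_ite_eq 0 _
  set S1 : ℝ := (1 / (2 * π)) * IB - (1 / (2 * π)) * IA + ‖c1 0‖ ^ 2 with hS1def
  have hS1 : HasSum
      (fun n : ℤ => ‖c2 n‖ ^ 2 - ‖c1 n‖ ^ 2 + if n = 0 then ‖c1 0‖ ^ 2 else 0) S1 :=
    hAB.add h0
  have hsq1 : ∀ n : ℤ, n ≠ 0 → (1 : ℝ) ≤ (n : ℝ) ^ 2 := by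
    intro n hn
    have h1 : (1 : ℤ) ≤ n ^ 2 := by rcases lt_or_gt_of_ne hn with h | h <;> nlinarith
    exact_mod_cast h1
  have htnonneg : ∀ n : ℤ,
      0 ≤ ‖c2 n‖ ^ 2 - ‖c1 n‖ ^ 2 + if n = 0 then ‖c1 0‖ ^ 2 else 0 := by
    intro n
    by_cases hn : n = 0
    · subst hn
      rw [if_pos rfl]
      linarith [sq_nonneg ‖c2 (0:ℤ)‖]
    · rw [if_neg hn, add_zero, hbd n]
      nlinarith [hsq1 n hn, sq_nonneg ‖c1 n‖]
  have hS1nonneg : 0 ≤ S1 := hasSum_le htnonneg hasSum_zero hS1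
  -- Δ in terms of S1
  have hΔeq : Δ = 4 * π ^ 2 * S1 := by
    have hπ : (π : ℝ) ≠ 0 := Real.pi_ne_zero
    rw [hΔ, hFsplit, hS1def, hd0]
    field_simp
    ring
  have hΔnonneg : 0 ≤ Δ := by
    rw [hΔeq]
    have : (0:ℝ) ≤ 4 * π ^ 2 := by positivity
    exact mul_nonneg this hS1nonneg
  -- Fe in terms of S2
  set S2 : ℝ := (1 / (2 * π)) * IC - (1 / (2 * π)) * IB with hS2def
  have hBC : HasSum (fun n : ℤ => ‖c3 n‖ ^ 2 - ‖c2 n‖ ^ 2) S2 := hCsum.sub hBsum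
  have hebnonneg : ∀ n : ℤ, 0 ≤ ‖c3 n‖ ^ 2 - ‖c2 n‖ ^ 2 := by
    intro n
    by_cases hn : n = 0
    · subst hn; rw [hc30, hc20]; simp
    · rw [hbe n]
      nlinarith [hsq1 n hn, sq_nonneg ‖c2 n‖]
  have hS2nonneg : 0 ≤ S2 := hasSum_le hebnonneg hasSum_zero hBC
  have hFeeq : Fe = -(π * S2) := by
    have hπ : (π : ℝ) ≠ 0 := Real.pi_ne_zero
    rw [hFe, hS2def]
    field_simp
    ring
  have habs : |Fe| = π * S2 := by
    rw [hFeeq, _root_.abs_neg, _root_.abs_of_nonneg (mul_nonneg Real.pi_pos.le hS2nonneg)]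
  -- key comparison: 4 * S1 ≤ S2
  have h4S1 : HasSum
      (fun n : ℤ => 4 * (‖c2 n‖ ^ 2 - ‖c1 n‖ ^ 2 + if n = 0 then ‖c1 0‖ ^ 2 else 0))
      (4 * S1) := hS1.mul_left 4
  have hptwise : ∀ n : ℤ,
      4 * (‖c2 n‖ ^ 2 - ‖c1 n‖ ^ 2 + if n = 0 then ‖c1 0‖ ^ 2 else 0)
        ≤ ‖c3 n‖ ^ 2 - ‖c2 n‖ ^ 2 := by
    intro n
    by_cases hn : n = 0
    · subst hn
      rw [if_pos rfl, hc30, hc20]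
      simp
    · rw [if_neg hn, add_zero, hbd n, hbe n, hbd n]
      by_cases h2 : 2 ≤ |n|
      · have h4le : (4 : ℝ) ≤ (n : ℝ) ^ 2 := by
          have h1 : (4 : ℤ) ≤ n ^ 2 := by nlinarith [_root_.sq_abs n, abs_nonneg n, h2]
          exact_mod_cast h1
        nlinarith [mul_nonneg (mul_nonneg (sub_nonneg.mpr h4le)
          (sub_nonneg.mpr (hsq1 n hn))) (sq_nonneg ‖c1 n‖)]
      · have h1 : |n| = 1 := by simp only [Int.abs_eq_natAbs] at h2 ⊢; omega
        have hm : (n : ℝ) ^ 2 = 1 := by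
          have h2' : n ^ 2 = 1 := by rw [← _root_.sq_abs n, h1]; norm_num
          exact_mod_cast h2'
        rw [hm]
        nlinarith [sq_nonneg ‖c1 n‖]
  have hkey : 4 * S1 ≤ S2 := hasSum_le hptwise h4S1 hBC
  refine ⟨hΔnonneg, ?_⟩
  rw [hΔeq, habs]
  nlinarith [hkey, Real.pi_pos, sq_nonneg π]
end

section
/- Let p : ℝ → ℝ be a 2π-periodic function of class C² satisfying ∫₀^{2π} p(φ)cos φ dφ = 0 and ∫₀^{2π} p(φ)sin φ dφ = 0. Set F = ½∫₀^{2π}(p² − p'²) dφ, A = ½∫₀^{2π} p² dφ and F_e = ½∫₀^{2π} p'² dφ − ½∫₀^{2π} p''² dφ. Then A − F ≤ (1/3)|F_e|; equivalently, ∫₀^{2π} p''(φ)² dφ ≥ 4∫₀^{2π} p'(φ)² dφ. -/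
open Real MeasureTheory Function Set AddCircle intervalIntegral
open scoped ENNReal

private instance fact_two_pi_pos : Fact (0 < 2*π) := ⟨Real.two_pi_pos⟩
private lemma two_pi_ab : (0:ℝ) < 0 + 2*π := by positivity

lemma parseval_helper (h : ℝ → ℂ) (hcont : Continuous h) (hp : h 0 = h (0 + 2*π)) :
    HasSum (fun n : ℤ => ‖fourierCoeff (AddCircle.liftIco (2*π) 0 h) n‖^2)
      ((1/(2*π)) * ∫ x in (0:ℝ)..(0+2*π), ‖h x‖^2) := by
  set fC : C(AddCircle (2*π), ℂ) :=
    ⟨AddCircle.liftIco (2*π) 0 h, AddCircle.liftIco_continuous hp hcont.continuousOn⟩ with hfC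
  set fL := ContinuousMap.toLp (E := ℂ) 2 haarAddCircle ℂ fC with hfL
  have hcoeff : ∀ n, fourierCoeff (⇑fL) n = fourierCoeff (AddCircle.liftIco (2*π) 0 h) n := by
    intro n
    have := fourierCoeff_toLp (T := 2*π) fC n
    exact this
  have hsum : Summable fun n : ℤ => ‖fourierCoeff (⇑fL) n‖^2 := by
    have hm := lp.memℓp (fourierBasis.repr fL)
    rw [memℓp_gen_iff (by norm_num)] at hm
    have : (fun i : ℤ => ‖(fourierBasis.repr fL) i‖ ^ (2:ℝ≥0∞).toReal)
        = fun i => ‖fourierCoeff (⇑fL) i‖^2 := by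
      funext i; rw [fourierBasis_repr]; norm_num
    rwa [this] at hm
  have hts := tsum_sq_fourierCoeff fL
  -- compute RHS integral
  have hint : ∫ t : AddCircle (2*π), ‖fL t‖^2 ∂haarAddCircle
      = (1/(2*π)) * ∫ x in (0:ℝ)..(0+2*π), ‖h x‖^2 := by
    have h1 : ∫ t : AddCircle (2*π), ‖fL t‖^2 ∂haarAddCircle
        = ∫ t : AddCircle (2*π), ‖fC t‖^2 ∂haarAddCircle := by
      apply MeasureTheory.integral_congr_ae
      filter_upwards [ContinuousMap.coeFn_toLp (p := 2) haarAddCircle (𝕜 := ℂ) fC] with t ht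
      rw [hfL, ht]
    have h2 : ∫ x in (0:ℝ)..(0+2*π), ‖h x‖^2 = ∫ x in (0:ℝ)..(0+2*π), ‖fC (x : AddCircle (2*π))‖^2 := by
      rw [integral_of_le (by positivity : (0:ℝ) ≤ 0+2*π), integral_of_le (by positivity : (0:ℝ) ≤ 0+2*π)]
      rw [integral_Ioc_eq_integral_Ioo, integral_Ioc_eq_integral_Ioo]
      apply setIntegral_congr_fun measurableSet_Ioo
      intro x hx
      simp only [hfC, ContinuousMap.coe_mk]
      rw [AddCircle.liftIco_coe_apply (Ioo_subset_Ico_self hx)]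
    have h3 := AddCircle.intervalIntegral_preimage (2*π) 0
      (fun t : AddCircle (2*π) => ‖fC t‖^2)
    rw [h2, h3, h1, volume_eq_smul_haarAddCircle, MeasureTheory.integral_smul_measure]
    rw [ENNReal.toReal_ofReal Real.two_pi_pos.le]
    rw [smul_eq_mul, ← mul_assoc, one_div, inv_mul_cancel₀ (by positivity : (2*π) ≠ 0), one_mul]
  have := hsum.hasSum
  rw [hts, hint] at this
  simp_rw [hcoeff] at this
  exact this

private lemma coeff_deriv_s15 (f f' : ℝ → ℂ) (hf : ∀ x, HasDerivAt f (f' x) x)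
    (hf'c : Continuous f') (hp : f (0 + 2*π) = f 0) {n : ℤ} (hn : n ≠ 0) :
    fourierCoeffOn two_pi_ab f' n = Complex.I * n * fourierCoeffOn two_pi_ab f n := by
  have key := fourierCoeffOn_of_hasDerivAt two_pi_ab hn (f' := f') (fun x _ => hf x)
    (hf'c.intervalIntegrable _ _)
  rw [hp, sub_self, mul_zero, zero_sub] at key
  have hπ : (π:ℂ) ≠ 0 := by exact_mod_cast Real.pi_ne_zero
  have hn' : (n:ℂ) ≠ 0 := by exact_mod_cast hn
  rw [key]
  have hI := Complex.I_ne_zero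
  push_cast
  field_simp
  ring

private lemma coeff_vanish_zero (g : ℝ → ℝ) (hgc : Continuous g)
    (h0 : ∫ x in (0:ℝ)..(2*π), g x = 0) :
    fourierCoeffOn two_pi_ab (fun x => (g x : ℂ)) 0 = 0 := by
  rw [fourierCoeffOn_eq_integral]
  simp only [neg_zero, fourier_zero, one_smul]
  rw [intervalIntegral.integral_ofReal]
  rw [zero_add, h0]
  simp

private lemma coeff_vanish_pm_one (g : ℝ → ℝ) (hgc : Continuous g)
    (hc : ∫ x in (0:ℝ)..(2*π), g x * Real.cos x = 0)
    (hs : ∫ x in (0:ℝ)..(2*π), g x * Real.sin x = 0)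
    {n : ℤ} (hn : n = 1 ∨ n = -1) :
    fourierCoeffOn two_pi_ab (fun x => (g x : ℂ)) n = 0 := by
  rw [fourierCoeffOn_eq_integral]
  have hπ : (π:ℂ) ≠ 0 := by exact_mod_cast Real.pi_ne_zero
  have hexp : ∀ x : ℝ, (fourier (-n) (x : AddCircle (0 + 2*π - 0)) : ℂ)
      = Complex.cos x - (n : ℂ) * Complex.sin x * Complex.I := by
    intro x
    rw [fourier_coe_apply]
    have harg : 2 * (π:ℂ) * Complex.I * (-n : ℤ) * x / ((0 + 2*π - 0 : ℝ) : ℂ)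
        = (-(n:ℂ) * x) * Complex.I := by
      push_cast
      field_simp
      ring
    rw [harg, Complex.exp_mul_I]
    rcases hn with h | h <;> subst h <;>
      simp [Complex.cos_neg, Complex.sin_neg] <;> ring
  have hint : ∫ x in (0:ℝ)..(0+2*π), (fourier (-n) (x : AddCircle (0 + 2*π - 0)) : ℂ) • ((g x : ℂ))
      = ((∫ x in (0:ℝ)..(0+2*π), g x * Real.cos x : ℝ) : ℂ)
        - (n:ℂ) * Complex.I * ((∫ x in (0:ℝ)..(0+2*π), g x * Real.sin x : ℝ) : ℂ) := by
    rw [← intervalIntegral.integral_ofReal, ← intervalIntegral.integral_ofReal,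
      ← intervalIntegral.integral_const_mul]
    rw [← intervalIntegral.integral_sub]
    · apply intervalIntegral.integral_congr
      intro x hx
      simp only [smul_eq_mul, hexp x]
      push_cast
      ring
    · exact (Complex.continuous_ofReal.comp (by continuity)).intervalIntegrable _ _
    · exact (continuous_const.mul (Complex.continuous_ofReal.comp (by continuity))).intervalIntegrable _ _
  rw [hint]
  rw [zero_add, hc, hs]
  simp

private lemma periodic_deriv'' {f : ℝ → ℝ} {c : ℝ} (hf : Function.Periodic f c) :
    Function.Periodic (deriv f) c := by
  intro x
  have h : (fun y => f (y + c)) = f := funext hf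
  rw [← deriv_comp_add_const, h]

private lemma wirtinger2 (g : ℝ → ℝ) (hg : ContDiff ℝ 1 g)
    (hper : Function.Periodic g (2*π))
    (h0 : ∫ x in (0:ℝ)..(2*π), g x = 0)
    (hc : ∫ x in (0:ℝ)..(2*π), g x * Real.cos x = 0)
    (hs : ∫ x in (0:ℝ)..(2*π), g x * Real.sin x = 0) :
    4 * ∫ x in (0:ℝ)..(2*π), g x ^ 2 ≤ ∫ x in (0:ℝ)..(2*π), (deriv g x) ^ 2 := by
  have hgc : Continuous g := hg.continuous
  have hg'c : Continuous (deriv g) := hg.continuous_deriv le_rfl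
  set G : ℝ → ℂ := fun x => (g x : ℂ) with hG
  set G' : ℝ → ℂ := fun x => Complex.ofReal (deriv g x) with hG'
  -- Parseval for G
  have hPG := parseval_helper G (Complex.continuous_ofReal.comp hgc)
    (by simp only [hG]; exact_mod_cast (hper 0).symm)
  have hPG' := parseval_helper G' (Complex.continuous_ofReal.comp hg'c)
    (by simp only [hG']; exact_mod_cast ((periodic_deriv'' hper) 0).symm)
  simp only [fourierCoeff_liftIco_eq] at hPG hPG'
  have hPG : HasSum (fun n : ℤ => ‖fourierCoeffOn two_pi_ab G n‖^2)
      ((1/(2*π)) * ∫ x in (0:ℝ)..(0+2*π), ‖G x‖^2) := hPG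
  have hPG' : HasSum (fun n : ℤ => ‖fourierCoeffOn two_pi_ab G' n‖^2)
      ((1/(2*π)) * ∫ x in (0:ℝ)..(0+2*π), ‖G' x‖^2) := hPG'
  -- rewrite norms
  have hnormG : ∫ x in (0:ℝ)..(0+2*π), ‖G x‖^2 = ∫ x in (0:ℝ)..(2*π), g x ^ 2 := by
    rw [zero_add]
    apply intervalIntegral.integral_congr
    intro x _
    simp [hG, Complex.norm_real, sq_abs, Real.norm_eq_abs]
  have hnormG' : ∫ x in (0:ℝ)..(0+2*π), ‖G' x‖^2 = ∫ x in (0:ℝ)..(2*π), (deriv g x) ^ 2 := by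
    rw [zero_add]
    apply intervalIntegral.integral_congr
    intro x _
    simp [hG', Complex.norm_real, sq_abs, Real.norm_eq_abs]
  rw [hnormG] at hPG
  rw [hnormG'] at hPG'
  -- termwise inequality
  have hterm : ∀ n : ℤ, 4 * ‖fourierCoeffOn two_pi_ab G n‖^2 ≤ ‖fourierCoeffOn two_pi_ab G' n‖^2 := by
    intro n
    by_cases hn0 : n = 0
    · subst hn0
      rw [coeff_vanish_zero g hgc h0]
      simpa using sq_nonneg ‖fourierCoeffOn two_pi_ab G' 0‖
    · have hrel : fourierCoeffOn two_pi_ab G' n = Complex.I * n * fourierCoeffOn two_pi_ab G n := by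
        apply coeff_deriv_s15 G G' (fun x => ((hg.differentiable one_ne_zero) x).hasDerivAt.ofReal_comp)
          (Complex.continuous_ofReal.comp hg'c) _ hn0
        simp only [hG]
        exact_mod_cast hper 0
      by_cases hn1 : n = 1 ∨ n = -1
      · rw [coeff_vanish_pm_one g hgc hc hs hn1]
        simpa using sq_nonneg ‖fourierCoeffOn two_pi_ab G' n‖
      · push_neg at hn1
        have h2 : (2:ℝ) ≤ |(n:ℝ)| := by
          have : (2:ℤ) ≤ |n| := by
            rw [Int.abs_eq_natAbs]
            exact_mod_cast (by omega : 2 ≤ n.natAbs)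
          calc (2:ℝ) = ((2:ℤ):ℝ) := by norm_num
          _ ≤ ((|n|:ℤ):ℝ) := by exact_mod_cast this
          _ = |(n:ℝ)| := by push_cast; ring
        rw [hrel]
        rw [norm_mul, norm_mul, Complex.norm_I, one_mul, Complex.norm_intCast]
        rw [mul_pow]
        have hsq : (4:ℝ) ≤ |(n:ℝ)|^2 := by nlinarith
        nlinarith [sq_nonneg ‖fourierCoeffOn two_pi_ab G n‖, sq_nonneg (|(n:ℝ)|)]
  have hle := hasSum_le hterm (hPG.mul_left 4) hPG'
  have h2π := Real.two_pi_pos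
  rw [div_mul_eq_mul_div, div_mul_eq_mul_div] at hle
  field_simp at hle
  exact hle

/-- Inequality (yyy): `A − F ≤ (1/3)|F_e|`; equivalently
`∫ p''² ≥ 4 ∫ p'²` when the origin is the Steiner point. -/
theorem pedal_area_diff_le_third_evolute_area
    (p : ℝ → ℝ)
    (hper : Function.Periodic p (2 * π))
    (hC2 : ContDiff ℝ 2 p)
    (hcos : ∫ φ in (0:ℝ)..(2 * π), p φ * Real.cos φ = 0)
    (hsin : ∫ φ in (0:ℝ)..(2 * π), p φ * Real.sin φ = 0)
    (F A Fe : ℝ)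
    (hF : F = (1 / 2) * ∫ φ in (0:ℝ)..(2 * π), (p φ ^ 2 - (deriv p φ) ^ 2))
    (hA : A = (1 / 2) * ∫ φ in (0:ℝ)..(2 * π), p φ ^ 2)
    (hFe : Fe = (1 / 2) * (∫ φ in (0:ℝ)..(2 * π), (deriv p φ) ^ 2) -
            (1 / 2) * ∫ φ in (0:ℝ)..(2 * π), (deriv (deriv p) φ) ^ 2) :
    A - F ≤ (1 / 3) * |Fe| ∧
      (∫ φ in (0:ℝ)..(2 * π), (deriv (deriv p) φ) ^ 2) ≥
        4 * ∫ φ in (0:ℝ)..(2 * π), (deriv p φ) ^ 2 := by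
  have hpc : Continuous p := hC2.continuous
  have hdiff : Differentiable ℝ p := hC2.differentiable (by norm_num)
  have hg : ContDiff ℝ 1 (deriv p) := (contDiff_succ_iff_deriv.mp
    (show ContDiff ℝ ((1:ℕ) + 1) p by exact_mod_cast hC2)).2.2
  have hg'c : Continuous (deriv p) := hg.continuous
  have hperg : Function.Periodic (deriv p) (2*π) := periodic_deriv'' hper
  have hper0 : p (2*π) = p 0 := by have := hper 0; rwa [zero_add] at this
  -- mean of deriv p vanishes
  have h0 : ∫ x in (0:ℝ)..(2*π), deriv p x = 0 := by
    rw [intervalIntegral.integral_deriv_eq_sub (fun x _ => hdiff x)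
      (hg'c.intervalIntegrable _ _), hper0, sub_self]
  -- integration by parts
  have hderivAt : ∀ x ∈ uIcc (0:ℝ) (2*π), HasDerivAt p (deriv p x) x :=
    fun x _ => (hdiff x).hasDerivAt
  have hcosDeriv : ∀ x ∈ uIcc (0:ℝ) (2*π), HasDerivAt Real.cos (-Real.sin x) x :=
    fun x _ => Real.hasDerivAt_cos x
  have hsinDeriv : ∀ x ∈ uIcc (0:ℝ) (2*π), HasDerivAt Real.sin (Real.cos x) x :=
    fun x _ => Real.hasDerivAt_sin x
  have hpartc : ∫ x in (0:ℝ)..(2*π), (deriv p x * Real.cos x + p x * (-Real.sin x))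
      = p (2*π) * Real.cos (2*π) - p 0 * Real.cos 0 :=
    intervalIntegral.integral_deriv_mul_eq_sub hderivAt hcosDeriv
      (hg'c.intervalIntegrable _ _) (continuous_sin.neg.intervalIntegrable _ _)
  have hparts : ∫ x in (0:ℝ)..(2*π), (deriv p x * Real.sin x + p x * Real.cos x)
      = p (2*π) * Real.sin (2*π) - p 0 * Real.sin 0 :=
    intervalIntegral.integral_deriv_mul_eq_sub hderivAt hsinDeriv
      (hg'c.intervalIntegrable _ _) (continuous_cos.intervalIntegrable _ _)
  rw [Real.cos_two_pi, Real.cos_zero, hper0, mul_one, sub_self] at hpartc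
  rw [Real.sin_two_pi, Real.sin_zero, mul_zero, mul_zero, sub_self] at hparts
  have hint1 : IntervalIntegrable (fun x => deriv p x * Real.cos x) volume 0 (2*π) :=
    (hg'c.mul continuous_cos).intervalIntegrable _ _
  have hint2 : IntervalIntegrable (fun x => p x * Real.sin x) volume 0 (2*π) :=
    (hpc.mul continuous_sin).intervalIntegrable _ _
  have hint3 : IntervalIntegrable (fun x => deriv p x * Real.sin x) volume 0 (2*π) :=
    (hg'c.mul continuous_sin).intervalIntegrable _ _
  have hint4 : IntervalIntegrable (fun x => p x * Real.cos x) volume 0 (2*π) :=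
    (hpc.mul continuous_cos).intervalIntegrable _ _
  have hc : ∫ x in (0:ℝ)..(2*π), deriv p x * Real.cos x = 0 := by
    have hsplit : ∫ x in (0:ℝ)..(2*π), (deriv p x * Real.cos x + p x * (-Real.sin x))
        = (∫ x in (0:ℝ)..(2*π), deriv p x * Real.cos x)
          - ∫ x in (0:ℝ)..(2*π), p x * Real.sin x := by
      rw [← intervalIntegral.integral_sub hint1 hint2]
      apply intervalIntegral.integral_congr
      intro x _; ring
    rw [hsplit, hsin, sub_zero] at hpartc
    exact hpartc
  have hs : ∫ x in (0:ℝ)..(2*π), deriv p x * Real.sin x = 0 := by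
    have hsplit : ∫ x in (0:ℝ)..(2*π), (deriv p x * Real.sin x + p x * Real.cos x)
        = (∫ x in (0:ℝ)..(2*π), deriv p x * Real.sin x)
          + ∫ x in (0:ℝ)..(2*π), p x * Real.cos x := intervalIntegral.integral_add hint3 hint4
    rw [hsplit, hcos, add_zero] at hparts
    exact hparts
  have hW := wirtinger2 (deriv p) hg hperg h0 hc hs
  constructor
  · -- A - F ≤ (1/3)|Fe|
    have hAF : A - F = (1/2) * ∫ x in (0:ℝ)..(2*π), (deriv p x) ^ 2 := by
      rw [hA, hF, intervalIntegral.integral_sub (f := fun x => p x ^ 2)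
        (g := fun x => deriv p x ^ 2) ((hpc.pow 2).intervalIntegrable _ _)
        ((hg'c.pow 2).intervalIntegrable _ _)]
      ring
    have hXnn : 0 ≤ ∫ x in (0:ℝ)..(2*π), (deriv p x) ^ 2 :=
      intervalIntegral.integral_nonneg Real.two_pi_pos.le (fun x _ => sq_nonneg _)
    have habs : -Fe ≤ |Fe| := neg_le_abs Fe
    rw [hAF]
    linarith [habs, hW, hXnn, hFe.le, hFe.ge]
  · exact hW
end
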